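/- arXiv:2303.00368 — 6 statements merged into one kernel-verified Lean document; each statement's English description precedes it below -/
import Mathlib

section
/- For each k = m,…,1 and each f_k ∈ ℂ[t,Δ_1,…,Δ_k], the product F_k = ∏_{j=1}^{e_k} f_k(t,Δ_1,…,Δ_{k−1}, γ_k^j·Δ_k), viewed as a polynomial in Δ_k, has nonzero coefficients only in degrees divisible by e_k; consequently f_{k−1}, the remainder of F_k upon division by E_k with respect to the variable Δ_k, lies in ℂ[t,Δ_1,…,Δ_{k−1}]. -/
open MvPolynomial
open scoped NNRat

noncomputable section
namespace Radical

variable {m : ℕ} {R : Type*} [CommRing R] [Algebra ℂ R]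

/-- The algebra endomorphism of `ℂ[t,Δ₁,…,Δ_m]` (variable `0` is `t`, variable
`i.succ` is `Δ_{i+1}`) substituting `X v ↦ c · X v` and fixing the other variables. -/
def conjVar (v : Fin (m+1)) (c : ℂ) :
    MvPolynomial (Fin (m+1)) R →ₐ[R] MvPolynomial (Fin (m+1)) R :=
  aeval fun u => if u = v then C (algebraMap ℂ R c) * X v else X u

/-- The remainder of `F` upon division by `X v ^ e - gk` with respect to the variable `v`
(assuming `gk` does not involve `v`): each occurrence of `(X v)^d` is replaced by
`gk^(d / e) * (X v)^(d % e)`. -/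
def remE (v : Fin (m+1)) (e : ℕ) (gk F : MvPolynomial (Fin (m+1)) R) :
    MvPolynomial (Fin (m+1)) R :=
  (AddMonoidAlgebra.coeff F).sum fun μ c => (C c * gk ^ (μ v / e)) * monomial (μ.update v (μ v % e)) 1

/-- `γ_k = exp(2πi/e_k)`. -/
def root (ek : ℕ) : ℂ := Complex.exp (2 * Real.pi * Complex.I / ek)

/-- `F_k = ∏_{j=1}^{e_k} f(t,Δ₁,…,Δ_{k-1},γ_k^j·Δ_k)` (here `k : Fin m` is the 0-based
index, the variable of `Δ_{k+1}` being `k.succ`). -/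
def conjProd (e : Fin m → ℕ) (k : Fin m) (f : MvPolynomial (Fin (m+1)) R) :
    MvPolynomial (Fin (m+1)) R :=
  ∏ j ∈ Finset.range (e k), conjVar k.succ (root (e k) ^ (j+1)) f

/-- One step of the normalized-remainder recursion: from `f_{k+1}` to `f_k`
(0-based `k : Fin m`): the remainder of `F_{k+1}` upon division by `E_{k+1}` w.r.t. `Δ_{k+1}`. -/
def step (e : Fin m → ℕ) (g : Fin m → MvPolynomial (Fin (m+1)) R) (k : Fin m)
    (f : MvPolynomial (Fin (m+1)) R) : MvPolynomial (Fin (m+1)) R :=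
  remE k.succ (e k) (g k) (conjProd e k f)

/-- `seqAux e g f j = f_{m-j}` in the normalized-remainder recursion starting at `f_m = f`. -/
def seqAux (e : Fin m → ℕ) (g : Fin m → MvPolynomial (Fin (m+1)) R)
    (f : MvPolynomial (Fin (m+1)) R) : ℕ → MvPolynomial (Fin (m+1)) R
  | 0 => f
  | j+1 => if h : j < m then step e g ⟨m - 1 - j, by omega⟩ (seqAux e g f j) else seqAux e g f j

/-- The normalized remainder `R(f) = f₀`. -/
def Rnorm (e : Fin m → ℕ) (g : Fin m → MvPolynomial (Fin (m+1)) R)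
    (f : MvPolynomial (Fin (m+1)) R) : MvPolynomial (Fin (m+1)) R :=
  seqAux e g f m

/-- `E_{i+1} = Δ_{i+1}^{e_{i+1}} - g_{i+1}` (0-based `i : Fin m`). -/
def Epoly (e : Fin m → ℕ) (g : Fin m → MvPolynomial (Fin (m+1)) R) (i : Fin m) :
    MvPolynomial (Fin (m+1)) R :=
  X i.succ ^ e i - g i

/-- `p` is in normal form w.r.t. `{E₁,…,E_m}` (i.e. `N(p) = p`): no `Δ_i^{e_i}` can be
substituted, that is `deg_{Δ_i} p < e_i` for all `i`. -/
def IsNormalForm (e : Fin m → ℕ) (p : MvPolynomial (Fin (m+1)) R) : Prop :=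
  ∀ i : Fin m, degreeOf i.succ p < e i

/-- `f` is guilty : `deg(f)·e₁⋯e_m > deg_t(R(f))`. -/
def Guilty (e : Fin m → ℕ) (g : Fin m → MvPolynomial (Fin (m+1)) ℂ)
    (w : Fin (m+1) → ℚ≥0) (f : MvPolynomial (Fin (m+1)) ℂ) : Prop :=
  ((degreeOf 0 (Rnorm e g f) : ℚ≥0)) < weightedTotalDegree w f * ∏ i, (e i : ℚ≥0)

/-- The set of exponents of the monomials in the homogeneous component of highest
weighted degree of `f`. -/
def leadSupport (w : Fin (m+1) → ℚ≥0) (f : MvPolynomial (Fin (m+1)) ℂ) :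
    Finset (Fin (m+1) →₀ ℕ) :=
  f.support.filter fun μ => Finsupp.weight w μ = weightedTotalDegree w f

/-- Auxiliary fuelled version of `Suspicious` (fuel `m` always suffices, since `g i` only
involves the variables `t, Δ₁, …, Δ_i`). -/
def SuspAux (g : Fin m → MvPolynomial (Fin (m+1)) ℂ) (w : Fin (m+1) → ℚ≥0) :
    ℕ → MvPolynomial (Fin (m+1)) ℂ → Prop
  | 0, f => 1 < (leadSupport w f).card
  | b+1, f => 1 < (leadSupport w f).card ∨
      ∃ i : Fin m, (∃ μ ∈ leadSupport w f, μ i.succ ≠ 0) ∧ SuspAux g w b (g i)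

/-- `f` is suspicious: either its homogeneous component of highest weighted degree has at
least two terms, or some `Δ_i` appears in its unique leading term and `g_i` is suspicious. -/
def Suspicious (g : Fin m → MvPolynomial (Fin (m+1)) ℂ) (w : Fin (m+1) → ℚ≥0)
    (f : MvPolynomial (Fin (m+1)) ℂ) : Prop :=
  SuspAux g w m f

/-- A subset of `ℂⁿ` is Zariski closed if it is the common zero locus of a family of
polynomials. -/
def IsZariskiClosed {n : ℕ} (S : Set (Fin n → ℂ)) : Prop :=
  ∃ T : Set (MvPolynomial (Fin n) ℂ), S = {x | ∀ p ∈ T, eval x p = 0}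

/-- The image set `X(P)` of the radical parametrization `P = (p₁/q₁,…,p_n/q_n)`. -/
def ImageSet {n : ℕ} (e : Fin m → ℕ) (g : Fin m → MvPolynomial (Fin (m+1)) ℂ)
    (p q : Fin n → MvPolynomial (Fin (m+1)) ℂ) : Set (Fin n → ℂ) :=
  {x | ∃ a : Fin (m+1) → ℂ, (∀ i, eval a (Epoly e g i) = 0) ∧
        (∀ i, eval a (q i) ≠ 0) ∧ ∀ i, eval a (p i) / eval a (q i) = x i}



section AuxStmt1
variable {m : ℕ}

lemma conjVar_monomial (v : Fin (m+1)) (c : ℂ) (s : Fin (m+1) →₀ ℕ) (a : ℂ) :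
    conjVar (R := ℂ) v c (monomial s a) = monomial s (c ^ s v * a) := by
  rw [conjVar, monomial_eq, map_mul, aeval_C]
  simp only [Algebra.algebraMap_self, RingHom.id_apply]
  rw [Finsupp.prod, map_prod]
  have h1 : ∀ u ∈ s.support,
      (aeval fun u => if u = v then C c * X v else X u) ((X u : MvPolynomial (Fin (m+1)) ℂ) ^ s u)
        = C (c ^ (if u = v then s u else 0)) * X u ^ s u := by
    intro u _
    rw [map_pow, aeval_X]
    by_cases h : u = v
    · rw [if_pos h, if_pos h, h, mul_pow, ← C_pow]
    · rw [if_neg h, if_neg h, pow_zero, C_1, one_mul]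
  rw [Finset.prod_congr rfl h1, Finset.prod_mul_distrib,
    ← map_prod (C : ℂ →+* MvPolynomial (Fin (m+1)) ℂ) (fun x => c ^ if x = v then s x else 0)
      s.support,
    Finset.prod_pow_eq_pow_sum, Finset.sum_ite_eq' s.support v s]
  by_cases hv : v ∈ s.support
  · rw [if_pos hv, monomial_eq, Finsupp.prod, MvPolynomial.algebraMap_eq, C_mul]
    ring
  · rw [if_neg hv, Finsupp.notMem_support_iff.mp hv, pow_zero, C_1, one_mul, one_mul,
      monomial_eq, Finsupp.prod, MvPolynomial.algebraMap_eq]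

lemma coeff_conjVar (v : Fin (m+1)) (c : ℂ) (f : MvPolynomial (Fin (m+1)) ℂ)
    (μ : Fin (m+1) →₀ ℕ) :
    coeff μ (conjVar v c f) = c ^ μ v * coeff μ f := by
  conv_lhs => rw [f.as_sum, map_sum]
  rw [Finset.sum_congr rfl fun s _ => conjVar_monomial v c s (coeff s f)]
  rw [coeff_sum]
  simp only [coeff_monomial]
  rw [Finset.sum_ite_eq' f.support μ]
  by_cases h : μ ∈ f.support
  · rw [if_pos h]
  · rw [if_neg h, MvPolynomial.notMem_support_iff.mp h, mul_zero]

lemma support_conjVar (v : Fin (m+1)) (c : ℂ) (f : MvPolynomial (Fin (m+1)) ℂ) :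
    (conjVar v c f).support ⊆ f.support := by
  intro μ hμ
  rw [mem_support_iff, coeff_conjVar] at hμ
  rw [mem_support_iff]
  exact fun h => hμ (by rw [h, mul_zero])

lemma vars_conjVar (v : Fin (m+1)) (c : ℂ) (f : MvPolynomial (Fin (m+1)) ℂ) :
    (conjVar v c f).vars ⊆ f.vars := by
  intro u hu
  rw [mem_vars] at hu ⊢
  obtain ⟨μ, hμ, hu⟩ := hu
  exact ⟨μ, support_conjVar v c f hμ, hu⟩

lemma conjVar_conjVar (v : Fin (m+1)) (c d : ℂ) (f : MvPolynomial (Fin (m+1)) ℂ) :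
    conjVar v c (conjVar v d f) = conjVar v (c * d) f := by
  induction f using MvPolynomial.induction_on with
  | C a => simp [conjVar]
  | add p q hp hq => simp [map_add, hp, hq]
  | mul_X p u hp =>
    rw [map_mul, map_mul, map_mul, hp]
    refine congrArg (HMul.hMul _) ?_
    by_cases h : u = v <;> simp [conjVar, h, mul_comm, mul_assoc, mul_left_comm]

lemma prod_shift {M : Type*} [CommMonoid M] (G : ℕ → M) (n : ℕ) (h : G (n+1) = G 0) :
    ∏ i ∈ Finset.range (n+1), G (i+1) = ∏ i ∈ Finset.range (n+1), G i := by
  rw [Finset.prod_range_succ, h, Finset.prod_range_succ']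

lemma prim_root (e : ℕ) (he : e ≠ 0) : IsPrimitiveRoot (root e) e :=
  Complex.isPrimitiveRoot_exp e he

lemma conjVar_prod_pow (v : Fin (m+1)) (γ : ℂ) (n : ℕ) (hγe : γ ^ (n+1) = 1)
    (f : MvPolynomial (Fin (m+1)) ℂ) :
    conjVar v γ (∏ j ∈ Finset.range (n+1), conjVar v (γ ^ (j+1)) f)
      = ∏ j ∈ Finset.range (n+1), conjVar v (γ ^ (j+1)) f := by
  rw [map_prod]
  have h1 : ∀ j ∈ Finset.range (n+1),
      conjVar v γ (conjVar v (γ ^ (j+1)) f) = conjVar v (γ ^ ((j+1)+1)) f := by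
    intro j _
    rw [conjVar_conjVar, ← pow_succ']
  rw [Finset.prod_congr rfl h1]
  exact prod_shift (fun j => conjVar v (γ ^ (j+1)) f) n
    (by show conjVar v (γ ^ (n+1+1)) f = conjVar v (γ ^ (0+1)) f
        rw [pow_succ, hγe, one_mul, zero_add, pow_one])

lemma conjVar_conjProd (e : Fin m → ℕ) (k : Fin m) (he : 1 ≤ e k)
    (f : MvPolynomial (Fin (m+1)) ℂ) :
    conjVar k.succ (root (e k)) (conjProd e k f) = conjProd e k f := by
  have hγe : root (e k) ^ e k = 1 := (prim_root (e k) (by omega)).pow_eq_one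
  obtain ⟨n, hn⟩ : ∃ n, e k = n + 1 := ⟨e k - 1, by omega⟩
  rw [conjProd, hn]
  rw [hn] at hγe
  exact conjVar_prod_pow k.succ _ n hγe f

lemma dvd_of_mem_support_conjProd (e : Fin m → ℕ) (k : Fin m) (he : 1 ≤ e k)
    (f : MvPolynomial (Fin (m+1)) ℂ) (μ : Fin (m+1) →₀ ℕ)
    (hμ : μ ∈ (conjProd e k f).support) : e k ∣ μ k.succ := by
  have h := coeff_conjVar k.succ (root (e k)) (conjProd e k f) μ
  rw [conjVar_conjProd e k he f] at h
  rw [mem_support_iff] at hμ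
  have h1 : root (e k) ^ μ k.succ = 1 := by
    by_contra hne
    have h2 : (root (e k) ^ μ k.succ - 1) * coeff μ (conjProd e k f) = 0 := by
      rw [sub_one_mul, ← h, sub_self]
    rcases mul_eq_zero.mp h2 with h' | h'
    · exact hne (sub_eq_zero.mp h')
    · exact hμ h'
  exact ((prim_root (e k) (by omega)).pow_eq_one_iff_dvd _).mp h1

lemma vars_conjProd (e : Fin m → ℕ) (k : Fin m) (f : MvPolynomial (Fin (m+1)) ℂ) :
    (conjProd e k f).vars ⊆ f.vars := by
  refine (vars_prod _).trans ?_
  intro u hu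
  obtain ⟨j, _, hj⟩ := Finset.mem_biUnion.mp hu
  exact vars_conjVar _ _ f hj

end AuxStmt1

/-- For `f_k ∈ ℂ[t,Δ₁,…,Δ_k]`, the product `F_k = ∏_{j=1}^{e_k} f_k(…, γ_k^j·Δ_k)`, viewed
as a polynomial in `Δ_k`, has nonzero coefficients only in degrees divisible by `e_k`;
consequently the remainder `f_{k-1}` of `F_k` upon division by `E_k` w.r.t. `Δ_k` lies in
`ℂ[t,Δ₁,…,Δ_{k-1}]`.  (Here `k : Fin m` is 0-based: `Δ_k` of the paper is the variable
`k.succ`, so "`f ∈ ℂ[t,Δ₁,…,Δ_k]`" reads "all variables of `f` have index `≤ k+1`".) -/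
theorem stmt1
    (m : ℕ) (hm : 1 ≤ m) (e : Fin m → ℕ) (he : ∀ i, 2 ≤ e i)
    (g : Fin m → MvPolynomial (Fin (m+1)) ℂ)
    (hgv : ∀ i : Fin m, ∀ v ∈ (g i).vars, (v : ℕ) ≤ (i : ℕ))
    (hgd : ∀ i j : Fin m, (j : ℕ) < (i : ℕ) → MvPolynomial.degreeOf j.succ (g i) < e j)
    (k : Fin m) (f : MvPolynomial (Fin (m+1)) ℂ)
    (hf : ∀ v ∈ f.vars, (v : ℕ) ≤ (k : ℕ) + 1) :
    (∀ μ ∈ (conjProd e k f).support, e k ∣ μ k.succ) ∧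
      (∀ v ∈ (remE k.succ (e k) (g k) (conjProd e k f)).vars, (v : ℕ) ≤ (k : ℕ)) := by
  have hek : 1 ≤ e k := le_trans (by norm_num) (he k)
  refine ⟨fun μ hμ => dvd_of_mem_support_conjProd e k hek f μ hμ, ?_⟩
  intro u hu
  set F := conjProd e k f with hF
  have hFvars : ∀ v ∈ F.vars, (v : ℕ) ≤ (k : ℕ) + 1 := fun v hv => hf v (vars_conjProd e k f hv)
  rw [remE, Finsupp.sum] at hu
  have hu' := vars_sum_subset F.support
    (fun μ => (C (coeff μ F) * g k ^ (μ k.succ / e k)) *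
      monomial (μ.update k.succ (μ k.succ % e k)) 1) hu
  obtain ⟨μ, hμF, hμ⟩ := Finset.mem_biUnion.mp hu'
  have hdvd : e k ∣ μ k.succ := dvd_of_mem_support_conjProd e k hek f μ hμF
  obtain ⟨c0, hc0⟩ := hdvd
  have hmod : μ k.succ % e k = 0 := by rw [hc0, Nat.mul_mod_right]
  rcases Finset.mem_union.mp (vars_mul _ _ hμ) with h | h
  · rcases Finset.mem_union.mp (vars_mul _ _ h) with h' | h'
    · simp [vars_C] at h'
    · exact hgv k u (vars_pow _ _ h')
  · rw [vars_monomial one_ne_zero, hmod, Finsupp.support_update_zero] at h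
    have hne := Finset.ne_of_mem_erase h
    have hmem := Finset.mem_of_mem_erase h
    have h2 : (u : ℕ) ≤ (k : ℕ) + 1 := hFvars u ((mem_vars u).mpr ⟨μ, hμF, hmem⟩)
    have h3 : (u : ℕ) ≠ (k : ℕ) + 1 := fun hh => hne (Fin.ext (by simpa using hh))
    omega


end Radical
end
end

section
/- For every nonzero f ∈ ℂ[t,Δ_1,…,Δ_m], the degree of the normalized remainder satisfies deg_t(R(f)) ≤ deg(f)·e_1⋯e_m, where deg(f) is the weighted degree of f. -/
open MvPolynomial
open scoped NNRat

noncomputable section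
namespace Radical

variable {m : ℕ} {R : Type*} [CommRing R] [Algebra ℂ R]

section WTD
variable (w : Fin (m+1) → ℚ≥0)

lemma wtd_le_iff {p : MvPolynomial (Fin (m+1)) ℂ} {n : ℚ≥0} :
    weightedTotalDegree w p ≤ n ↔ ∀ μ ∈ p.support, Finsupp.weight w μ ≤ n := by
  simp [weightedTotalDegree, Finset.sup_le_iff]

lemma wtd_monomial (μ : Fin (m+1) →₀ ℕ) (a : ℂ) :
    weightedTotalDegree w (monomial μ a) ≤ Finsupp.weight w μ := by
  rw [wtd_le_iff]
  intro ν hν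
  classical
  rw [support_monomial] at hν
  split at hν
  · simp at hν
  · simp only [Finset.mem_singleton] at hν
    subst hν; exact le_rfl

lemma weight_single (u : Fin (m+1)) (n : ℕ) :
    Finsupp.weight w (Finsupp.single u n) = n • w u := by
  rw [Finsupp.weight_apply, Finsupp.sum_single_index]
  simp

lemma wtd_C (a : ℂ) : weightedTotalDegree w (C a : MvPolynomial (Fin (m+1)) ℂ) ≤ 0 := by
  simpa using wtd_monomial w 0 a

lemma wtd_X (u : Fin (m+1)) :
    weightedTotalDegree w (X u : MvPolynomial (Fin (m+1)) ℂ) ≤ w u := by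
  have := wtd_monomial w (Finsupp.single u 1) (1 : ℂ)
  rw [weight_single] at this
  simpa [X] using this

lemma wtd_mul (p q : MvPolynomial (Fin (m+1)) ℂ) :
    weightedTotalDegree w (p * q) ≤ weightedTotalDegree w p + weightedTotalDegree w q := by
  classical
  rw [wtd_le_iff]
  intro μ hμ
  have h := MvPolynomial.support_mul p q hμ
  rw [Finset.mem_add] at h
  obtain ⟨a, ha, b, hb, rfl⟩ := h
  rw [map_add]
  exact add_le_add (le_weightedTotalDegree w ha) (le_weightedTotalDegree w hb)

lemma wtd_pow (p : MvPolynomial (Fin (m+1)) ℂ) (n : ℕ) :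
    weightedTotalDegree w (p ^ n) ≤ n • weightedTotalDegree w p := by
  induction n with
  | zero => simpa using wtd_C w 1
  | succ n ih =>
    rw [pow_succ, succ_nsmul]
    exact (wtd_mul w _ _).trans (add_le_add ih le_rfl)

lemma wtd_sum_le {ι : Type*} (s : Finset ι) (p : ι → MvPolynomial (Fin (m+1)) ℂ) (n : ℚ≥0)
    (h : ∀ i ∈ s, weightedTotalDegree w (p i) ≤ n) :
    weightedTotalDegree w (∑ i ∈ s, p i) ≤ n := by
  classical
  rw [wtd_le_iff]
  intro μ hμ
  obtain ⟨i, hi⟩ := Finset.mem_biUnion.1 (MvPolynomial.support_sum hμ)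
  exact le_trans (le_weightedTotalDegree w hi.2) (h i hi.1)

lemma wtd_prod {ι : Type*} (s : Finset ι) (p : ι → MvPolynomial (Fin (m+1)) ℂ) :
    weightedTotalDegree w (∏ i ∈ s, p i) ≤ ∑ i ∈ s, weightedTotalDegree w (p i) := by
  classical
  induction s using Finset.induction with
  | empty => simpa using wtd_C w 1
  | insert _ _ hx ih =>
    rw [Finset.prod_insert hx, Finset.sum_insert hx]
    exact (wtd_mul w _ _).trans (add_le_add le_rfl ih)

lemma wtd_conjVar (v : Fin (m+1)) (c : ℂ) (p : MvPolynomial (Fin (m+1)) ℂ) :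
    weightedTotalDegree w (conjVar v c p) ≤ weightedTotalDegree w p := by
  classical
  conv_lhs => rw [p.as_sum]
  rw [map_sum]
  apply wtd_sum_le
  intro μ hμ
  rw [conjVar, aeval_monomial]
  refine le_trans (wtd_mul w _ _) (le_trans ?_ (le_weightedTotalDegree w hμ))
  have h1 : weightedTotalDegree w
      (algebraMap ℂ (MvPolynomial (Fin (m+1)) ℂ) (coeff μ p)) ≤ 0 := wtd_C w _
  have h2 : weightedTotalDegree w
      (μ.prod fun u k => (if u = v then C ((algebraMap ℂ ℂ) c) * X v else X u) ^ k)
      ≤ Finsupp.weight w μ := by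
    rw [Finsupp.prod]
    refine le_trans (wtd_prod w _ _) ?_
    rw [Finsupp.weight_apply, Finsupp.sum]
    apply Finset.sum_le_sum
    intro u hu
    refine le_trans (wtd_pow w _ _) ?_
    refine nsmul_le_nsmul_right ?_ _
    split
    · rename_i h; subst h
      exact le_trans (wtd_mul w _ _) (by simpa using add_le_add (wtd_C w _) (wtd_X w u))
    · exact wtd_X w u
  calc weightedTotalDegree w _ + weightedTotalDegree w _
      ≤ 0 + Finsupp.weight w μ := add_le_add h1 h2
    _ = Finsupp.weight w μ := zero_add _

lemma wtd_remE (v : Fin (m+1)) (e : ℕ) (g F : MvPolynomial (Fin (m+1)) ℂ)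
    (hg : weightedTotalDegree w g ≤ (e : ℚ≥0) * w v) :
    weightedTotalDegree w (remE v e g F) ≤ weightedTotalDegree w F := by
  classical
  rw [remE, Finsupp.sum]
  apply wtd_sum_le
  intro μ hμ
  have hsplit : μ = (μ.update v (μ v % e)) + Finsupp.single v (e * (μ v / e)) := by
    ext u
    rcases eq_or_ne u v with h | h
    · subst h
      simp only [Finsupp.add_apply, Finsupp.coe_update, Function.update_self,
        Finsupp.single_eq_same]
      exact (Nat.mod_add_div _ _).symm
    · simp [Finsupp.add_apply, Finsupp.coe_update, Function.update_of_ne h,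
        Finsupp.single_apply, (Ne.symm h : v ≠ u)]
  have hkey : Finsupp.weight w μ
      = Finsupp.weight w (μ.update v (μ v % e)) + (e * (μ v / e)) • w v := by
    conv_lhs => rw [hsplit]
    rw [map_add, weight_single]
  refine le_trans (wtd_mul w _ _) (le_trans ?_ (le_weightedTotalDegree w hμ))
  rw [hkey]
  have h1 : weightedTotalDegree w (C (coeff μ F) * g ^ (μ v / e))
      ≤ (e * (μ v / e)) • w v := by
    refine le_trans (wtd_mul w _ _) ?_
    have hp := wtd_pow w g (μ v / e)
    have h2 : (μ v / e) • weightedTotalDegree w g ≤ (e * (μ v / e)) • w v := by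
      refine le_trans (nsmul_le_nsmul_right hg _) (le_of_eq ?_)
      simp only [nsmul_eq_mul]
      push_cast
      ring
    calc _ ≤ 0 + (μ v / e) • weightedTotalDegree w g := add_le_add (wtd_C w _) hp
      _ ≤ _ := by rw [zero_add]; exact h2
  calc _ ≤ (e * (μ v / e)) • w v + Finsupp.weight w (μ.update v (μ v % e)) :=
        add_le_add h1 (wtd_monomial w _ 1)
    _ = _ := add_comm _ _

lemma wtd_step (e : Fin m → ℕ) (g : Fin m → MvPolynomial (Fin (m+1)) ℂ)
    (w : Fin (m+1) → ℚ≥0) (k : Fin m)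
    (hw : weightedTotalDegree w (g k) ≤ (e k : ℚ≥0) * w k.succ)
    (p : MvPolynomial (Fin (m+1)) ℂ) :
    weightedTotalDegree w (step e g k p) ≤ (e k : ℚ≥0) * weightedTotalDegree w p := by
  refine le_trans (wtd_remE w _ _ _ _ hw) ?_
  rw [conjProd]
  refine le_trans (wtd_prod w _ _) ?_
  calc ∑ _j ∈ Finset.range (e k), weightedTotalDegree w _
      ≤ ∑ _j ∈ Finset.range (e k), weightedTotalDegree w p :=
        Finset.sum_le_sum fun j _ => wtd_conjVar w _ _ p
    _ = (e k : ℚ≥0) * weightedTotalDegree w p := by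
        rw [Finset.sum_const, Finset.card_range, nsmul_eq_mul]

lemma degreeOf_zero_le_wtd (w : Fin (m+1) → ℚ≥0) (hw0 : w 0 = 1)
    (p : MvPolynomial (Fin (m+1)) ℂ) :
    ((degreeOf 0 p : ℚ≥0)) ≤ weightedTotalDegree w p := by
  classical
  by_cases hp : p = 0
  · simp [hp]
  obtain ⟨μ, hμ, hμ2⟩ := Finset.exists_mem_eq_sup p.support
    (support_nonempty.mpr hp) fun ν : Fin (m+1) →₀ ℕ => ν 0
  rw [degreeOf_eq_sup, hμ2]
  refine le_trans ?_ (le_weightedTotalDegree w hμ)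
  rw [Finsupp.weight_apply, Finsupp.sum]
  by_cases h0 : μ 0 = 0
  · simp [h0]
  · have := Finset.single_le_sum (f := fun u => μ u • w u)
      (fun u _ => zero_le) (Finsupp.mem_support_iff.mpr h0)
    refine le_trans (le_of_eq ?_) this
    show (μ 0 : ℚ≥0) = μ 0 • w 0
    rw [hw0, nsmul_eq_mul, mul_one]

end WTD


/-- For every nonzero `f ∈ ℂ[t,Δ₁,…,Δ_m]`, `deg_t(R(f)) ≤ deg(f)·e₁⋯e_m`, where `deg` is
the weighted degree (`deg t = 1`, `e_i·deg Δ_i = deg g_i`) and `R(f)` is the normalized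
remainder of `f`. -/
theorem stmt3
    (m : ℕ) (hm : 1 ≤ m) (e : Fin m → ℕ) (he : ∀ i, 2 ≤ e i)
    (g : Fin m → MvPolynomial (Fin (m+1)) ℂ)
    (hgv : ∀ i : Fin m, ∀ v ∈ (g i).vars, (v : ℕ) ≤ (i : ℕ))
    (hgd : ∀ i j : Fin m, (j : ℕ) < (i : ℕ) → MvPolynomial.degreeOf j.succ (g i) < e j)
    (w : Fin (m+1) → ℚ≥0) (hw0 : w 0 = 1)
    (hw : ∀ i : Fin m, (e i : ℚ≥0) * w i.succ = weightedTotalDegree w (g i))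
    (f : MvPolynomial (Fin (m+1)) ℂ) (hf : f ≠ 0) :
    ((degreeOf 0 (Rnorm e g f) : ℚ≥0)) ≤ weightedTotalDegree w f * ∏ i, (e i : ℚ≥0) := by
  have he' : ∀ k : Fin m, weightedTotalDegree w (g k) ≤ (e k : ℚ≥0) * w k.succ :=
    fun k => le_of_eq (hw k).symm
  have key : ∀ j, j ≤ m → weightedTotalDegree w (seqAux e g f j) ≤
      weightedTotalDegree w f *
        ∏ i ∈ Finset.univ.filter (fun i : Fin m => m - j ≤ (i : ℕ)), (e i : ℚ≥0) := by
    intro j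
    induction j with
    | zero =>
      intro _
      have hemp : (Finset.univ.filter (fun i : Fin m => m - 0 ≤ (i : ℕ))) = ∅ := by
        rw [Finset.filter_eq_empty_iff]
        intro i _
        have := i.isLt
        omega
      rw [hemp]
      simp [seqAux]
    | succ j ih =>
      intro hj
      have hjm : j < m := hj
      set k : Fin m := ⟨m - 1 - j, by omega⟩ with hk
      have hkv : (k : ℕ) = m - 1 - j := rfl
      have hseq : seqAux e g f (j+1) = step e g k (seqAux e g f j) := by
        rw [seqAux, dif_pos hjm]
      have hins : Finset.univ.filter (fun i : Fin m => m - (j+1) ≤ (i : ℕ))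
          = insert k (Finset.univ.filter (fun i : Fin m => m - j ≤ (i : ℕ))) := by
        ext i
        simp only [Finset.mem_insert, Finset.mem_filter, Finset.mem_univ, true_and,
          Fin.ext_iff, hkv]
        have := i.isLt
        omega
      have hnot : k ∉ Finset.univ.filter (fun i : Fin m => m - j ≤ (i : ℕ)) := by
        simp only [Finset.mem_filter, Finset.mem_univ, true_and, hkv]
        omega
      rw [hseq, hins, Finset.prod_insert hnot]
      calc weightedTotalDegree w (step e g k (seqAux e g f j))
          ≤ (e k : ℚ≥0) * weightedTotalDegree w (seqAux e g f j) :=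
            wtd_step e g w k (he' k) _
        _ ≤ (e k : ℚ≥0) * (weightedTotalDegree w f *
              ∏ i ∈ Finset.univ.filter (fun i : Fin m => m - j ≤ (i : ℕ)), (e i : ℚ≥0)) :=
            mul_le_mul_right (ih (le_of_lt hjm)) _
        _ = _ := by ring
  have hfin := key m le_rfl
  have huniv : (Finset.univ.filter (fun i : Fin m => m - m ≤ (i : ℕ))) = Finset.univ := by
    apply Finset.filter_true_of_mem
    intro i _
    omega
  rw [huniv] at hfin
  exact le_trans (degreeOf_zero_le_wtd w hw0 _) hfin


end Radical
end
end

section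
/- Let e ≥ 2, let g(t) = a_0 + a_1 t + ⋯ + a_k t^k ∈ ℂ[t] with a_k ≠ 0, and let f(t,Δ) = c_0(t) + c_1(t)Δ + ⋯ + c_{e−1}(t)Δ^{e−1} be a nonzero polynomial in ℂ[t,Δ]. Let M = max{ deg_t(c_i) + (k/e)·i : c_i ≠ 0 }, let J = { i : c_i ≠ 0 and deg_t(c_i) + (k/e)·i = M }, and let f_l(Δ) = Σ_{i∈J} lc(c_i)·Δ^i ∈ ℂ[Δ], where lc denotes the leading coefficient. Then Res_Δ(f, Δ^e − g) = L·t^{eM} + (terms of strictly lower degree in t), where L = Res_Δ(f_l(Δ), Δ^e − a_k); that is, the coefficient of t^{eM} in Res_Δ(f, Δ^e − g) equals Res_Δ(f_l(Δ), Δ^e − a_k), and all higher coefficients vanish. -/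
noncomputable section

/-- For `A, B ∈ S[X]` with `A` monic, the resultant `Res_X(A, B)` equals the product of
the values of `B` at the roots of `A`, i.e. the norm of `B mod A` in `S[X]/(A)`; we take
this as the definition of the resultant (for monic `A`). -/
def resultantOfMonic {S : Type*} [CommRing S] (A B : Polynomial S) : S :=
  Algebra.norm S (AdjoinRoot.mk A B)

open Polynomial Finset

lemma res_eq_det {R : Type*} [CommRing R] [Nontrivial R] {A : R[X]} (hA : A.Monic) (B : R[X]) :
    resultantOfMonic A B =
      (Matrix.of fun i j : Fin A.natDegree => ((B * X ^ (j:ℕ)) %ₘ A).coeff i).det := by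
  rw [resultantOfMonic, Algebra.norm_eq_matrix_det (AdjoinRoot.powerBasisAux' hA)]
  congr 1
  ext i j
  rw [Algebra.leftMulMatrix_eq_repr_mul]
  have hbj : (AdjoinRoot.powerBasisAux' hA) j = AdjoinRoot.mk A (X ^ (j:ℕ)) := by
    have hb : (AdjoinRoot.powerBasisAux' hA) j = (AdjoinRoot.powerBasis' hA).basis j := rfl
    rw [hb, (AdjoinRoot.powerBasis' hA).basis_eq_pow j, AdjoinRoot.powerBasis'_gen,
      ← AdjoinRoot.mk_X, ← map_pow]
  rw [hbj, AdjoinRoot.powerBasisAux'_repr_apply_to_fun, ← map_mul,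
    AdjoinRoot.modByMonicHom_mk, Matrix.of_apply]

lemma coeff_mul_X_pow_modByMonic {R : Type*} [CommRing R] [Nontrivial R] {e : ℕ} (he : 0 < e)
    (a : R) (B : R[X]) (hB : B.natDegree < e) {i j : ℕ} (hi : i < e) (hj : j < e) :
    ((B * X ^ j) %ₘ (X ^ e - C a)).coeff i =
      if j ≤ i then B.coeff (i - j) else a * B.coeff (i + e - j) := by
  have hA : (X ^ e - C a).Monic := monic_X_pow_sub_C a he.ne'
  set bc : ℕ → R := fun m => if m + j < e then B.coeff m else B.coeff m * a with hbc
  set pw : ℕ → ℕ := fun m => if m + j < e then m + j else m + j - e with hpw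
  set r : R[X] := ∑ m ∈ range e, C (bc m) * X ^ (pw m) with hr
  have hkey : B * X ^ j = (X ^ e - C a) *
      (∑ m ∈ range e, if m + j < e then 0 else C (B.coeff m) * X ^ (m + j - e)) + r := by
    conv_lhs => rw [B.as_sum_range' e hB]
    rw [Finset.sum_mul, Finset.mul_sum, hr, ← Finset.sum_add_distrib]
    refine Finset.sum_congr rfl fun m hm => ?_
    rw [← C_mul_X_pow_eq_monomial]
    by_cases hmj : m + j < e
    · simp only [hbc, hpw, if_pos hmj, mul_zero, zero_add, mul_assoc, ← pow_add]
    · have hme : m + j - e + e = m + j := by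
        have hm' : m < e := mem_range.mp hm
        omega
      simp only [hbc, hpw, if_neg hmj]
      rw [C_mul]
      conv_lhs => rw [mul_assoc, ← pow_add, ← hme, pow_add]
      ring
  have hrd : r.degree < (X ^ e - C a).degree := by
    rw [degree_X_pow_sub_C he]
    refine lt_of_le_of_lt (degree_sum_le _ _) ?_
    rw [Finset.sup_lt_iff (by exact_mod_cast (WithBot.bot_lt_coe e))]
    intro m hm
    refine lt_of_le_of_lt (degree_mul_le _ _) ?_
    have h1 : (C (bc m)).degree ≤ 0 := degree_C_le
    have h2 : (X ^ (pw m) : R[X]).degree = pw m := degree_X_pow _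
    have h3 : pw m < e := by
      have hm' : m < e := mem_range.mp hm
      simp only [hpw]
      split <;> omega
    calc (C (bc m)).degree + (X ^ (pw m) : R[X]).degree ≤ 0 + (pw m : ℕ) := by
          exact add_le_add h1 (le_of_eq h2)
      _ < (e : WithBot ℕ) := by rw [zero_add]; exact_mod_cast h3
  have hmod : (B * X ^ j) %ₘ (X ^ e - C a) = r := by
    rw [hkey, add_modByMonic, (modByMonic_eq_zero_iff_dvd hA).mpr (dvd_mul_right _ _),
      (modByMonic_eq_self_iff hA).mpr hrd, zero_add]
  rw [hmod, hr, finset_sum_coeff]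
  simp only [coeff_C_mul, coeff_X_pow]
  by_cases hij : j ≤ i
  · rw [if_pos hij]
    rw [Finset.sum_eq_single (i - j)]
    · have : pw (i - j) = i := by simp only [hpw]; rw [if_pos (by omega)]; omega
      rw [this, if_pos rfl, hbc]
      simp only [if_pos (show i - j + j < e by omega)]
      ring
    · intro m hm hne
      have hm' : m < e := mem_range.mp hm
      have : pw m ≠ i := by simp only [hpw]; split <;> omega
      rw [if_neg (fun h => this h.symm), mul_zero]
    · intro h; exact absurd (mem_range.mpr (by omega)) h
  · rw [if_neg hij]
    push_neg at hij
    rw [Finset.sum_eq_single (i + e - j)]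
    · have : pw (i + e - j) = i := by simp only [hpw]; rw [if_neg (by omega)]; omega
      rw [this, if_pos rfl, hbc]
      simp only [if_neg (show ¬(i + e - j + j < e) by omega)]
      ring
    · intro m hm hne
      have hm' : m < e := mem_range.mp hm
      have : pw m ≠ i := by simp only [hpw]; split <;> omega
      rw [if_neg (fun h => this h.symm), mul_zero]
    · intro h; exact absurd (mem_range.mpr (by omega)) h

lemma res_X_pow_sub_C {R : Type*} [CommRing R] [Nontrivial R] {e : ℕ} (he : 0 < e) (a : R)
    (B : R[X]) (hB : B.natDegree < e) :
    resultantOfMonic (X ^ e - C a) B =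
      (Matrix.of fun i j : Fin e =>
        if (j:ℕ) ≤ (i:ℕ) then B.coeff (i - j) else a * B.coeff ((i:ℕ) + e - j)).det := by
  have hA : (X ^ e - C a).Monic := monic_X_pow_sub_C a he.ne'
  rw [res_eq_det hA B]
  have hdeg : (X ^ e - C a : R[X]).natDegree = e := natDegree_X_pow_sub_C
  rw [← Matrix.det_reindex_self (finCongr hdeg)
    (Matrix.of fun i j : Fin (X ^ e - C a : R[X]).natDegree => ((B * X ^ (j:ℕ)) %ₘ (X ^ e - C a)).coeff i)]
  congr 1
  ext i j
  simp only [Matrix.reindex_apply, Matrix.submatrix_apply, Matrix.of_apply, finCongr_symm,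
    finCongr_apply, Fin.coe_cast]
  exact coeff_mul_X_pow_modByMonic he a B hB i.isLt j.isLt

lemma coeff_prod_of_le {R : Type*} [CommRing R] {ι : Type*} (s : Finset ι) (p : ι → R[X])
    (r : ι → ℕ) (h : ∀ j ∈ s, (p j).natDegree ≤ r j) :
    (∏ j ∈ s, p j).coeff (∑ j ∈ s, r j) = ∏ j ∈ s, (p j).coeff (r j) := by
  induction s using Finset.cons_induction with
  | empty => simp
  | cons a s ha ih =>
    rw [Finset.prod_cons, Finset.sum_cons, Finset.prod_cons,
      coeff_mul_add_eq_of_natDegree_le (h a (Finset.mem_cons_self a s))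
        (le_trans (natDegree_prod_le s p) (Finset.sum_le_sum fun j hj => h j (Finset.mem_cons_of_mem hj))),
      ih fun j hj => h j (Finset.mem_cons_of_mem hj)]

lemma aux_zero {R : Type*} [CommRing R] {n e : ℕ} (he : 0 < e) (p : Fin n → R[X])
    (w : Fin n → ℤ) (hb : ∀ j, ∀ r : ℕ, w j < e * r → (p j).coeff r = 0)
    (d : ℕ) (hd : (∑ j, w j) < e * d) : (∏ j, p j).coeff d = 0 := by
  by_cases hz : ∃ j, p j = 0
  · obtain ⟨j, hj⟩ := hz
    rw [Finset.prod_eq_zero (Finset.mem_univ j) hj, coeff_zero]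
  · push_neg at hz
    have hdeg : ∀ j, (e : ℤ) * (p j).natDegree ≤ w j := by
      intro j
      by_contra hc
      push_neg at hc
      exact hz j (leadingCoeff_eq_zero.mp (hb j _ hc))
    have h1 : (e : ℤ) * (∑ j, ((p j).natDegree : ℤ)) ≤ ∑ j, w j := by
      rw [Finset.mul_sum]
      exact Finset.sum_le_sum fun j _ => hdeg j
    have h2 : (e : ℤ) * (∑ j, ((p j).natDegree : ℤ)) < e * d := lt_of_le_of_lt h1 hd
    have h3 : (∑ j, (p j).natDegree) < d := by
      have := lt_of_mul_lt_mul_left h2 (by positivity : (0:ℤ) ≤ e)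
      exact_mod_cast (by push_cast at this ⊢; exact this : ((∑ j, (p j).natDegree : ℕ) : ℤ) < d)
    exact coeff_eq_zero_of_natDegree_lt
      (lt_of_le_of_lt (natDegree_prod_le Finset.univ p) h3)


/-- The case `m = 1`: `E = Δ^e − g(t)`, weighted degree `deg t = 1`, `deg Δ = k/e` where
`k = deg g`.  Writing `f = Σ_i c_i(t) Δ^i ∈ ℂ[t][Δ]` (so `ℂ[t][Δ]` is
`Polynomial (Polynomial ℂ)`, with `Δ` the outer variable and `c_i = f.coeff i`),
`M` the weighted degree of `f`, `J` the set of indices attaining it, and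
`f_l = Σ_{i∈J} lc(c_i)·Δ^i`, one has
`Res_Δ(f, Δ^e − g) = L·t^{eM} +` (terms of strictly lower degree in `t`), where
`L = Res_Δ(f_l, Δ^e − a_k)` and `a_k = lc(g)`; that is, `e·M` is a natural number `D`,
the coefficient of `t^D` in `Res_Δ(f, Δ^e − g)` equals `L`, and all higher coefficients
vanish. -/
theorem stmt7 (e : ℕ) (he : 2 ≤ e) (g : Polynomial ℂ) (hg : g ≠ 0)
    (f : Polynomial (Polynomial ℂ)) (hf : f ≠ 0) (hfe : f.natDegree < e)
    (M : ℚ)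
    (hM1 : ∀ i, f.coeff i ≠ 0 → ((f.coeff i).natDegree : ℚ) + (g.natDegree : ℚ) / e * i ≤ M)
    (hM2 : ∃ i, f.coeff i ≠ 0 ∧ ((f.coeff i).natDegree : ℚ) + (g.natDegree : ℚ) / e * i = M)
    (J : Finset ℕ)
    (hJ : ∀ i, i ∈ J ↔
      (f.coeff i ≠ 0 ∧ ((f.coeff i).natDegree : ℚ) + (g.natDegree : ℚ) / e * i = M))
    (fl : Polynomial ℂ)
    (hfl : fl = ∑ i ∈ J, Polynomial.C ((f.coeff i).leadingCoeff) * Polynomial.X ^ i) :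
    ∃ D : ℕ, (D : ℚ) = e * M ∧
      (resultantOfMonic (Polynomial.X ^ e - Polynomial.C g) f).coeff D =
        resultantOfMonic (Polynomial.X ^ e - Polynomial.C g.leadingCoeff) fl ∧
      ∀ d : ℕ, D < d →
        (resultantOfMonic (Polynomial.X ^ e - Polynomial.C g) f).coeff d = 0 := by
  have he' : 0 < e := by omega
  have he0 : (0:ℚ) < e := by exact_mod_cast he'
  set k := g.natDegree with hk
  obtain ⟨i₀, hc₀, hM₀⟩ := hM2
  set D : ℕ := e * (f.coeff i₀).natDegree + k * i₀ with hDdef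
  -- basic cast identity
  have cast_wt : ∀ m : ℕ, ((e * (f.coeff m).natDegree + k * m : ℕ) : ℚ)
      = e * (((f.coeff m).natDegree : ℚ) + (k:ℚ)/e * m) := by
    intro m; push_cast; field_simp
  have hD : (D : ℚ) = e * M := by
    rw [hDdef, cast_wt i₀, hM₀]
  -- weighted degree facts in ℕ
  have hle : ∀ m, f.coeff m ≠ 0 → e * (f.coeff m).natDegree + k * m ≤ D := by
    intro m hm
    have h1 : ((e * (f.coeff m).natDegree + k * m : ℕ) : ℚ) ≤ (D:ℚ) := by
      rw [cast_wt m, hD]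
      exact mul_le_mul_of_nonneg_left (hM1 m hm) he0.le
    exact_mod_cast h1
  have heqJ : ∀ m, m ∈ J → e * (f.coeff m).natDegree + k * m = D := by
    intro m hm
    obtain ⟨hm1, hm2⟩ := (hJ m).mp hm
    have h1 : ((e * (f.coeff m).natDegree + k * m : ℕ) : ℚ) = (D:ℚ) := by
      rw [cast_wt m, hD, hm2]
    exact_mod_cast h1
  have hltJ : ∀ m, f.coeff m ≠ 0 → m ∉ J → e * (f.coeff m).natDegree + k * m < D := by
    intro m hm hmJ
    have hne : ((f.coeff m).natDegree : ℚ) + (k:ℚ)/e * m ≠ M := by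
      intro hcon
      exact hmJ ((hJ m).mpr ⟨hm, hcon⟩)
    have h1 : ((e * (f.coeff m).natDegree + k * m : ℕ) : ℚ) < (D:ℚ) := by
      rw [cast_wt m, hD]
      have := lt_of_le_of_ne (hM1 m hm) hne
      exact mul_lt_mul_of_pos_left this he0
    exact_mod_cast h1
  -- fl facts
  have hflc : ∀ m, fl.coeff m = if m ∈ J then (f.coeff m).leadingCoeff else 0 := by
    intro m
    rw [hfl, finset_sum_coeff]
    simp only [coeff_C_mul, coeff_X_pow, mul_ite, mul_one, mul_zero]
    rw [Finset.sum_ite_eq J m (fun i => (f.coeff i).leadingCoeff)]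
  have hJlt : ∀ m ∈ J, m < e := by
    intro m hm
    have := ((hJ m).mp hm).1
    exact lt_of_le_of_lt (le_natDegree_of_ne_zero this) hfe
  have hfl_deg : fl.natDegree < e := by
    have : fl.natDegree ≤ e - 1 := by
      rw [hfl]
      refine natDegree_sum_le_of_forall_le J _ fun i hi => ?_
      refine le_trans (natDegree_mul_le) ?_
      simp only [natDegree_C, natDegree_X_pow, zero_add]
      have := hJlt i hi; omega
    omega
  -- the two matrices
  set P : Fin e → Fin e → (Polynomial ℂ) := fun i j =>
    if (j:ℕ) ≤ (i:ℕ) then f.coeff ((i:ℕ) - (j:ℕ)) else g * f.coeff ((i:ℕ) + e - (j:ℕ)) with hPdef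
  set L : Fin e → Fin e → ℂ := fun i j =>
    if (j:ℕ) ≤ (i:ℕ) then fl.coeff ((i:ℕ) - (j:ℕ))
    else g.leadingCoeff * fl.coeff ((i:ℕ) + e - (j:ℕ)) with hLdef
  -- per-entry facts
  have F2 : ∀ i j : Fin e, ∀ r : ℕ, (D:ℤ) + k * ((j:ℤ) - (i:ℤ)) < e * r →
      (P i j).coeff r = 0 := by
    intro i j r hr
    rw [hPdef]
    by_cases hij : (j:ℕ) ≤ (i:ℕ)
    · simp only [if_pos hij]
      set m := (i:ℕ) - (j:ℕ) with hm
      by_cases hc : f.coeff m = 0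
      · rw [hc, coeff_zero]
      · have h1 := hle m hc
        have hmz : (m:ℤ) = (i:ℤ) - (j:ℤ) := by push_cast [hm]; omega
        apply coeff_eq_zero_of_natDegree_lt
        have hkm : (k:ℤ) * ((j:ℤ) - (i:ℤ)) = -((k:ℤ) * m) := by rw [hmz]; ring
        have : (e:ℤ) * (f.coeff m).natDegree < e * r := by
          have h2 : (e:ℤ) * (f.coeff m).natDegree + k * m ≤ D := by exact_mod_cast h1
          omega
        exact_mod_cast lt_of_mul_lt_mul_left this (by positivity)
    · simp only [if_neg hij]
      push_neg at hij
      set m := (i:ℕ) + e - (j:ℕ) with hm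
      by_cases hc : f.coeff m = 0
      · rw [hc, mul_zero, coeff_zero]
      · have h1 := hle m hc
        have hmz : (m:ℤ) = (i:ℤ) + e - (j:ℤ) := by
          have : (j:ℕ) ≤ (i:ℕ) + e := by omega
          push_cast [hm]; omega
        apply coeff_eq_zero_of_natDegree_lt
        have hdeg : (g * f.coeff m).natDegree = k + (f.coeff m).natDegree :=
          natDegree_mul hg hc
        rw [hdeg]
        have h3 : (j:ℤ) - (i:ℤ) = (e:ℤ) - m := by omega
        have hkm : (k:ℤ) * ((j:ℤ) - (i:ℤ)) = (e:ℤ)*k - (k:ℤ)*m := by rw [h3]; ring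
        have : (e:ℤ) * (k + (f.coeff m).natDegree) < e * r := by
          have h2 : (e:ℤ) * (f.coeff m).natDegree + k * m ≤ D := by exact_mod_cast h1
          rw [mul_add]
          omega
        exact_mod_cast lt_of_mul_lt_mul_left this (by positivity)
  have hePos : (0:ℤ) < e := by exact_mod_cast he'
  have F3 : ∀ i j : Fin e, ∀ r : ℕ, (e:ℤ) * r = (D:ℤ) + k * ((j:ℤ) - (i:ℤ)) →
      (P i j).coeff r = L i j := by
    intro i j r hr
    rw [hPdef, hLdef]
    by_cases hij : (j:ℕ) ≤ (i:ℕ)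
    · simp only [if_pos hij]
      set m := (i:ℕ) - (j:ℕ) with hm
      have hmz : (m:ℤ) = (i:ℤ) - (j:ℤ) := by push_cast [hm]; omega
      have hkm : (k:ℤ) * ((j:ℤ) - (i:ℤ)) = -((k:ℤ) * m) := by rw [hmz]; ring
      rw [hflc m]
      by_cases hmJ : m ∈ J
      · rw [if_pos hmJ]
        have h2 : (e:ℤ)*(f.coeff m).natDegree + k*m = D := by exact_mod_cast heqJ m hmJ
        have hrdeg : r = (f.coeff m).natDegree := by
          have h4 : (e:ℤ)*r = (e:ℤ)*(f.coeff m).natDegree := by omega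
          exact_mod_cast mul_left_cancel₀ hePos.ne' h4
        rw [hrdeg, coeff_natDegree]
      · rw [if_neg hmJ]
        by_cases hc : f.coeff m = 0
        · rw [hc, coeff_zero]
        · have h2 : (e:ℤ)*(f.coeff m).natDegree + k*m < D := by exact_mod_cast hltJ m hc hmJ
          apply coeff_eq_zero_of_natDegree_lt
          have h5 : (e:ℤ) * (f.coeff m).natDegree < e * r := by omega
          exact_mod_cast lt_of_mul_lt_mul_left h5 hePos.le
    · simp only [if_neg hij]
      push_neg at hij
      have hj' : (j:ℕ) < e := j.isLt
      set m := (i:ℕ) + e - (j:ℕ) with hm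
      have hmz : (m:ℤ) = (i:ℤ) + e - (j:ℤ) := by push_cast [hm]; omega
      have h3 : (j:ℤ) - (i:ℤ) = (e:ℤ) - m := by omega
      have hkm : (k:ℤ)*((j:ℤ)-(i:ℤ)) = (e:ℤ)*k - (k:ℤ)*m := by rw [h3]; ring
      rw [hflc m]
      by_cases hmJ : m ∈ J
      · rw [if_pos hmJ]
        have h2 : (e:ℤ)*(f.coeff m).natDegree + k*m = D := by exact_mod_cast heqJ m hmJ
        have hrdeg : r = k + (f.coeff m).natDegree := by
          have h4 : (e:ℤ)*r = (e:ℤ)*(k + (f.coeff m).natDegree) := by rw [mul_add]; omega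
          exact_mod_cast mul_left_cancel₀ hePos.ne' h4
        rw [hrdeg, hk]
        exact coeff_mul_degree_add_degree g (f.coeff m)
      · rw [if_neg hmJ, mul_zero]
        by_cases hc : f.coeff m = 0
        · rw [hc, mul_zero, coeff_zero]
        · have h2 : (e:ℤ)*(f.coeff m).natDegree + k*m < D := by exact_mod_cast hltJ m hc hmJ
          apply coeff_eq_zero_of_natDegree_lt
          rw [natDegree_mul hg hc]
          have h5 : (e:ℤ) * (k + (f.coeff m).natDegree) < e * r := by rw [mul_add]; omega
          exact_mod_cast lt_of_mul_lt_mul_left h5 hePos.le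
  have F4 : ∀ i j : Fin e, (∀ r : ℕ, (e:ℤ) * r ≠ (D:ℤ) + k * ((j:ℤ) - (i:ℤ))) → L i j = 0 := by
    intro i j hr
    rw [hLdef]
    by_cases hij : (j:ℕ) ≤ (i:ℕ)
    · simp only [if_pos hij]
      set m := (i:ℕ) - (j:ℕ) with hm
      have hmz : (m:ℤ) = (i:ℤ) - (j:ℤ) := by push_cast [hm]; omega
      have hkm : (k:ℤ) * ((j:ℤ) - (i:ℤ)) = -((k:ℤ) * m) := by rw [hmz]; ring
      rw [hflc m]
      by_cases hmJ : m ∈ J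
      · exfalso
        have h2 : (e:ℤ)*(f.coeff m).natDegree + k*m = D := by exact_mod_cast heqJ m hmJ
        exact hr (f.coeff m).natDegree (by omega)
      · rw [if_neg hmJ]
    · simp only [if_neg hij]
      push_neg at hij
      have hj' : (j:ℕ) < e := j.isLt
      set m := (i:ℕ) + e - (j:ℕ) with hm
      have hmz : (m:ℤ) = (i:ℤ) + e - (j:ℤ) := by push_cast [hm]; omega
      have h3 : (j:ℤ) - (i:ℤ) = (e:ℤ) - m := by omega
      have hkm : (k:ℤ)*((j:ℤ)-(i:ℤ)) = (e:ℤ)*k - (k:ℤ)*m := by rw [h3]; ring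
      rw [hflc m]
      by_cases hmJ : m ∈ J
      · exfalso
        have h2 : (e:ℤ)*(f.coeff m).natDegree + k*m = D := by exact_mod_cast heqJ m hmJ
        refine hr (k + (f.coeff m).natDegree) ?_
        push_cast
        rw [mul_add]
        omega
      · rw [if_neg hmJ, mul_zero]
  -- sum of weights over a permutation
  have hWsum : ∀ σ : Equiv.Perm (Fin e),
      (∑ i : Fin e, ((D:ℤ) + k * ((i:ℤ) - ((σ i :Fin e):ℤ)))) = e * D := by
    intro σ
    rw [Finset.sum_add_distrib, Finset.sum_const, Finset.card_univ, Fintype.card_fin,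
      ← Finset.mul_sum]
    have h1 : (∑ i : Fin e, (((i:ℕ):ℤ) - ((σ i : Fin e):ℤ))) = 0 := by
      rw [Finset.sum_sub_distrib]
      rw [Equiv.sum_comp σ (fun i : Fin e => ((i:ℕ):ℤ))]
      ring
    rw [h1, mul_zero, add_zero, nsmul_eq_mul]
  -- the key coefficient computation
  have key : ∀ d : ℕ, D ≤ d → (Matrix.of P).det.coeff d =
      if d = D then (Matrix.of L).det else 0 := by
    intro d hd
    rw [Matrix.det_apply, finset_sum_coeff]
    by_cases hdD : d = D
    · subst hdD
      rw [if_pos rfl, Matrix.det_apply]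
      refine Finset.sum_congr rfl fun σ _ => ?_
      rw [coeff_smul]
      congr 1
      by_cases hgood : ∀ i : Fin e, ∃ r : ℕ, (e:ℤ) * r = (D:ℤ) + k * ((i:ℤ) - ((σ i:Fin e):ℤ))
      · choose r hrr using hgood
        have hrsum : (∑ i, r i) = D := by
          have h4 : (e:ℤ) * (∑ i, (r i : ℤ)) = (e:ℤ) * D := by
            rw [Finset.mul_sum]
            simp_rw [hrr]
            exact hWsum σ
          have := mul_left_cancel₀ hePos.ne' h4
          exact_mod_cast this
        have hdegle : ∀ i : Fin e, ((Matrix.of P) (σ i) i).natDegree ≤ r i := by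
          intro i
          rw [natDegree_le_iff_coeff_eq_zero]
          intro N hN
          refine F2 (σ i) i N ?_
          rw [← hrr i]
          have : (r i : ℤ) < N := by exact_mod_cast hN
          nlinarith
        rw [← hrsum, coeff_prod_of_le Finset.univ _ r (fun i _ => hdegle i)]
        exact Finset.prod_congr rfl fun i _ => F3 (σ i) i (r i) (hrr i)
      · push_neg at hgood
        obtain ⟨i₁, hi₁⟩ := hgood
        have hLz : (Matrix.of L) (σ i₁) i₁ = 0 := F4 (σ i₁) i₁ hi₁
        have hz : (∏ i : Fin e, Matrix.of L (σ i) i) = 0 :=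
          Finset.prod_eq_zero (Finset.mem_univ i₁) hLz
        rw [hz]
        refine aux_zero he' _ (fun i => if i = i₁ then (D:ℤ) + k * ((i:ℤ) - ((σ i:Fin e):ℤ)) - 1
          else (D:ℤ) + k * ((i:ℤ) - ((σ i:Fin e):ℤ))) ?_ D ?_
        · intro i rr hw
          by_cases hii : i = i₁
          · subst hii
            simp only [if_pos rfl] at hw
            refine F2 (σ i) i rr ?_
            rcases lt_or_eq_of_le (by omega : (D:ℤ) + k * ((i:ℤ) - ((σ i:Fin e):ℤ)) ≤ e * rr)
              with h | h
            · exact h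
            · exact absurd h.symm (hi₁ rr)
          · simp only [if_neg hii] at hw
            exact F2 (σ i) i rr hw
        · have h6 : ∀ i : Fin e, (if i = i₁ then (D:ℤ) + k * ((i:ℤ) - ((σ i:Fin e):ℤ)) - 1
              else (D:ℤ) + k * ((i:ℤ) - ((σ i:Fin e):ℤ)))
              = ((D:ℤ) + k * ((i:ℤ) - ((σ i:Fin e):ℤ))) - (if i = i₁ then 1 else 0) := by
            intro i; split <;> simp
          rw [Finset.sum_congr rfl (fun i _ => h6 i), Finset.sum_sub_distrib,
            Finset.sum_ite_eq' Finset.univ i₁ (fun _ => (1:ℤ)), if_pos (Finset.mem_univ i₁),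
            hWsum σ]
          omega
    · rw [if_neg hdD]
      refine Finset.sum_eq_zero fun σ _ => ?_
      rw [coeff_smul]
      have hz : (∏ i : Fin e, Matrix.of P (σ i) i).coeff d = 0 := by
        refine aux_zero he' _ (fun i => (D:ℤ) + k * ((i:ℤ) - ((σ i:Fin e):ℤ)))
          (fun i => F2 (σ i) i) d ?_
        rw [hWsum σ]
        have hDd : D < d := by omega
        have : (D:ℤ) < d := by exact_mod_cast hDd
        nlinarith
      rw [hz, smul_zero]
  -- conclude
  refine ⟨D, hD, ?_, ?_⟩
  · rw [res_X_pow_sub_C he' g f hfe, res_X_pow_sub_C he' g.leadingCoeff fl hfl_deg]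
    have := key D le_rfl
    rw [if_pos rfl] at this
    exact this
  · intro d hdlt
    rw [res_X_pow_sub_C he' g f hfe]
    have := key d hdlt.le
    rw [if_neg (by omega)] at this
    exact this
end
end

section
/- Let p, q ∈ ℂ[t,Δ_1,…,Δ_m]. If gcd(R(p), R(q)) = 1 in ℂ[t], then there is no point (t,Δ̄) ∈ ℂ^{m+1} satisfying E_i(t,Δ̄) = 0 for all i = 1,…,m together with p(t,Δ̄) = 0 and q(t,Δ̄) = 0; equivalently, the ideal generated by E_1,…,E_m, p, q is the whole ring ℂ[t,Δ_1,…,Δ_m]. -/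
open MvPolynomial
open scoped NNRat

noncomputable section
namespace Radical

variable {m : ℕ} {R : Type*} [CommRing R] [Algebra ℂ R]

section AuxProofs

variable {M : ℕ}

lemma eval_remE (a : Fin (M+1) → ℂ) (v : Fin (M+1)) (e : ℕ)
    (gk F : MvPolynomial (Fin (M+1)) ℂ) (h : a v ^ e = eval a gk) :
    eval a (remE v e gk F) = eval a F := by
  rw [remE, map_finsuppSum, eval_eq']
  refine Finset.sum_congr rfl fun μ _ => ?_
  show eval a (C (coeff μ F) * gk ^ (μ v / e) * monomial (μ.update v (μ v % e)) 1) = _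
  rw [eval_mul, eval_mul, eval_C, eval_pow, eval_monomial, ← h,
      Finsupp.prod_fintype _ _ (fun i => pow_zero _)]
  have key : ∀ i : Fin (M+1), a i ^ ((μ.update v (μ v % e)) i)
      = Function.update (fun i => a i ^ μ i) v (a v ^ (μ v % e)) i := fun i => by
    rcases eq_or_ne i v with rfl | h'
    · simp
    · simp [Function.update_of_ne h', Finsupp.update, h']
  rw [Finset.prod_congr rfl (fun i _ => key i),
      Finset.prod_update_of_mem (Finset.mem_univ v),
      ← Finset.mul_prod_erase Finset.univ (fun i => a i ^ μ i) (Finset.mem_univ v),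
      Finset.erase_eq]
  have h2 : (a v ^ e) ^ (μ v / e) * a v ^ (μ v % e) = a v ^ μ v := by
    rw [← pow_mul, ← pow_add, Nat.div_add_mod]
  linear_combination (coeff μ F * ∏ x ∈ Finset.univ \ {v}, a x ^ μ x) * h2

lemma conjVar_one (v : Fin (M+1)) (f : MvPolynomial (Fin (M+1)) ℂ) :
    conjVar v 1 f = f := by
  rw [conjVar]
  have h : (fun u => if u = v then C ((algebraMap ℂ ℂ) 1) * X v else X u)
      = (X : Fin (M+1) → MvPolynomial (Fin (M+1)) ℂ) := by
    funext u
    rcases eq_or_ne u v with rfl | h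
    · simp
    · simp [h]
  rw [h, aeval_X_left_apply]

lemma root_pow_self {e : ℕ} (he : e ≠ 0) : root e ^ e = 1 := by
  rw [root, ← Complex.exp_nat_mul]
  have h : (e : ℂ) * (2 * Real.pi * Complex.I / e) = 2 * Real.pi * Complex.I := by
    rw [mul_div_assoc', mul_div_cancel_left₀]
    exact_mod_cast he
  rw [h, Complex.exp_two_pi_mul_I]

lemma eval_conjProd_eq_zero (a : Fin (M+1) → ℂ) (e : Fin M → ℕ) (k : Fin M)
    (hek : e k ≠ 0) (f : MvPolynomial (Fin (M+1)) ℂ) (hf : eval a f = 0) :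
    eval a (conjProd e k f) = 0 := by
  rw [conjProd, map_prod]
  refine Finset.prod_eq_zero (i := e k - 1) (Finset.mem_range.2 (by omega)) ?_
  have h1 : root (e k) ^ (e k - 1 + 1) = 1 := by
    rw [Nat.sub_add_cancel (Nat.one_le_iff_ne_zero.2 hek)]
    exact root_pow_self hek
  rw [h1, conjVar_one, hf]

lemma eval_step_eq_zero (a : Fin (M+1) → ℂ) (e : Fin M → ℕ)
    (g : Fin M → MvPolynomial (Fin (M+1)) ℂ) (k : Fin M) (hek : e k ≠ 0)
    (hE : eval a (Epoly e g k) = 0) (f : MvPolynomial (Fin (M+1)) ℂ)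
    (hf : eval a f = 0) : eval a (step e g k f) = 0 := by
  have h : a k.succ ^ e k = eval a (g k) := by
    rw [Epoly, map_sub, sub_eq_zero, eval_pow, eval_X] at hE
    exact hE
  rw [step, eval_remE a _ _ _ _ h, eval_conjProd_eq_zero a e k hek f hf]

lemma eval_Rnorm_eq_zero (a : Fin (M+1) → ℂ) (e : Fin M → ℕ) (he : ∀ i, 2 ≤ e i)
    (g : Fin M → MvPolynomial (Fin (M+1)) ℂ)
    (hE : ∀ i, eval a (Epoly e g i) = 0) (f : MvPolynomial (Fin (M+1)) ℂ)
    (hf : eval a f = 0) : eval a (Rnorm e g f) = 0 := by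
  suffices h : ∀ j, eval a (seqAux e g f j) = 0 from h M
  intro j
  induction j with
  | zero => exact hf
  | succ j ih =>
    rw [seqAux]
    split
    · exact eval_step_eq_zero a e g _ (by have := he ⟨M - 1 - j, by omega⟩; omega) (hE _) _ ih
    · exact ih

end AuxProofs

/-- If `gcd(R(p), R(q)) = 1` in `ℂ[t]` (recall `R(p), R(q) ∈ ℂ[t]`, embedded in
`ℂ[t,Δ₁,…,Δ_m]` via `t ↦ X 0`), then there is no point `(t,Δ̄) ∈ ℂ^{m+1}` satisfying
`E_i(t,Δ̄) = 0` for all `i` together with `p(t,Δ̄) = 0` and `q(t,Δ̄) = 0`; equivalently,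
the ideal generated by `E₁,…,E_m, p, q` is the whole ring. -/
theorem stmt9
    (m : ℕ) (hm : 1 ≤ m) (e : Fin m → ℕ) (he : ∀ i, 2 ≤ e i)
    (g : Fin m → MvPolynomial (Fin (m+1)) ℂ)
    (hgv : ∀ i : Fin m, ∀ v ∈ (g i).vars, (v : ℕ) ≤ (i : ℕ))
    (hgd : ∀ i j : Fin m, (j : ℕ) < (i : ℕ) → MvPolynomial.degreeOf j.succ (g i) < e j)
    (p q : MvPolynomial (Fin (m+1)) ℂ)
    (P Q : Polynomial ℂ)
    (hP : Polynomial.aeval (X 0 : MvPolynomial (Fin (m+1)) ℂ) P = Rnorm e g p)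
    (hQ : Polynomial.aeval (X 0 : MvPolynomial (Fin (m+1)) ℂ) Q = Rnorm e g q)
    (hgcd : IsCoprime P Q) :
    (¬ ∃ a : Fin (m+1) → ℂ,
        (∀ i, eval a (Epoly e g i) = 0) ∧ eval a p = 0 ∧ eval a q = 0) ∧
      Ideal.span (insert p (insert q (Set.range (Epoly e g)))) = ⊤ := by
  classical
  have hee : ∀ a : Fin (m+1) → ℂ, ∀ f : MvPolynomial (Fin (m+1)) ℂ,
      aeval a f = eval a f := fun a f => rfl
  have key : ¬ ∃ a : Fin (m+1) → ℂ,
      (∀ i, eval a (Epoly e g i) = 0) ∧ eval a p = 0 ∧ eval a q = 0 := by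
    rintro ⟨a, hE, hp, hq⟩
    have hRp := eval_Rnorm_eq_zero a e he g hE p hp
    have hRq := eval_Rnorm_eq_zero a e he g hE q hq
    have hP0 : Polynomial.eval (a 0) P = 0 := by
      have h1 := Polynomial.aeval_algHom_apply (MvPolynomial.aeval a)
        (X 0 : MvPolynomial (Fin (m+1)) ℂ) P
      rw [hP, aeval_X, hee, hRp] at h1
      simpa using h1
    have hQ0 : Polynomial.eval (a 0) Q = 0 := by
      have h1 := Polynomial.aeval_algHom_apply (MvPolynomial.aeval a)
        (X 0 : MvPolynomial (Fin (m+1)) ℂ) Q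
      rw [hQ, aeval_X, hee, hRq] at h1
      simpa using h1
    obtain ⟨u, v, huv⟩ := hgcd
    have := congrArg (Polynomial.eval (a 0)) huv
    simp [hP0, hQ0] at this
  refine ⟨key, ?_⟩
  set S : Set (MvPolynomial (Fin (m+1)) ℂ) :=
    insert p (insert q (Set.range (Epoly e g))) with hS
  have h1 : MvPolynomial.zeroLocus ℂ (Ideal.span S) = ∅ := by
    ext x
    simp only [MvPolynomial.mem_zeroLocus_iff, Set.mem_empty_iff_false, iff_false]
    intro hx
    refine key ⟨x, fun i => hx _ (Ideal.subset_span ?_), hx p (Ideal.subset_span ?_),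
      hx q (Ideal.subset_span ?_)⟩
    · exact Set.mem_insert_iff.2 (Or.inr (Set.mem_insert_iff.2 (Or.inr ⟨i, rfl⟩)))
    · exact Set.mem_insert _ _
    · exact Set.mem_insert_iff.2 (Or.inr (Set.mem_insert _ _))
  have h2 := MvPolynomial.vanishingIdeal_zeroLocus_eq_radical (K := ℂ) (Ideal.span S)
  rw [h1, MvPolynomial.vanishingIdeal_empty] at h2
  exact Ideal.radical_eq_top.1 h2.symm

end Radical
end
end

section
/- Let P = (p_1/q_1,…,p_n/q_n) be a radical parametrization such that for each i either (a) p_i, q_i ∈ ℂ[t] with gcd(p_i,q_i) = 1 (a rational component), or (b) q_i = 1 and p_i ∈ ℂ[t,Δ_1,…,Δ_m] with N(p_i) = p_i (a polynomial component). If some rational component satisfies deg(p_i) > deg(q_i), then the image set X(P) is Zariski closed in ℂ^n, i.e. P is surjective. -/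
open MvPolynomial
open scoped NNRat

noncomputable section
namespace Radical

variable {m : ℕ} {R : Type*} [CommRing R] [Algebra ℂ R]

section Aux

/-- Renaming embedding `ℂ[t,Δ] → ℂ[t,Δ,u]`. -/
def emb : MvPolynomial (Fin (m+1)) ℂ →ₐ[ℂ] MvPolynomial (Fin (m+2)) ℂ :=
  rename Fin.castSucc

/-- The denominator polynomials, as polynomials in `t` inside `ℂ[t,Δ,u]`. -/
def QQ {n : ℕ} (Qc : Fin n → Polynomial ℂ) (i : Fin n) : MvPolynomial (Fin (m+2)) ℂ :=
  Polynomial.aeval (X 0) (Qc i)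

/-- The generator `u·∏Q − 1`. -/
def uGen {n : ℕ} (Qc : Fin n → Polynomial ℂ) : MvPolynomial (Fin (m+2)) ℂ :=
  X (Fin.last (m+1)) * ∏ j, QQ Qc j - 1

/-- The ideal of the graph variety. -/
def Jid {n : ℕ} (e : Fin m → ℕ) (g : Fin m → MvPolynomial (Fin (m+1)) ℂ)
    (Qc : Fin n → Polynomial ℂ) : Ideal (MvPolynomial (Fin (m+2)) ℂ) :=
  Ideal.span (Set.range (fun k => emb (Epoly e g k)) ∪ {uGen Qc})

/-- The coordinate functions, as polynomials on the graph variety. -/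
def Fmap {n : ℕ} (p : Fin n → MvPolynomial (Fin (m+1)) ℂ) (Qc : Fin n → Polynomial ℂ)
    (i : Fin n) : MvPolynomial (Fin (m+2)) ℂ :=
  emb (p i) * (X (Fin.last (m+1)) * ∏ j ∈ Finset.univ.erase i, QQ Qc j)

/-- The ideal of the image. -/
def Kid {n : ℕ} (e : Fin m → ℕ) (g : Fin m → MvPolynomial (Fin (m+1)) ℂ)
    (p : Fin n → MvPolynomial (Fin (m+1)) ℂ) (Qc : Fin n → Polynomial ℂ) :
    Ideal (MvPolynomial (Fin n) ℂ) :=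
  (Jid e g Qc).comap (aeval (Fmap p Qc) : MvPolynomial (Fin n) ℂ →ₐ[ℂ] _).toRingHom

lemma aeval_eq_eval {σ : Type*} (a : σ → ℂ) (f : MvPolynomial σ ℂ) :
    aeval a f = eval a f := by
  rw [aeval_def, Algebra.algebraMap_self, eval₂_id]

lemma eval_aeval' {σ τ : Type*} (a : τ → ℂ) (F : σ → MvPolynomial τ ℂ)
    (f : MvPolynomial σ ℂ) :
    eval a (aeval F f) = eval (fun i => eval a (F i)) f := by
  calc eval a (aeval F f) = aeval a (aeval F f) := (aeval_eq_eval _ _).symm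
    _ = aeval (fun i => aeval a (F i)) f := comp_aeval_apply _ _ _
    _ = eval (fun i => eval a (F i)) f := by simp only [aeval_eq_eval]

lemma prod_sub_one_mem {R' : Type*} [CommRing R'] (J : Ideal R') {ι : Type*}
    (s : Finset ι) (f : ι → R') (h : ∀ i ∈ s, f i - 1 ∈ J) :
    (∏ i ∈ s, f i) - 1 ∈ J := by
  classical
  induction s using Finset.cons_induction with
  | empty => simp
  | cons a s ha ih =>
    rw [Finset.prod_cons]
    have h1 : f a * (∏ i ∈ s, f i) - 1
        = f a * ((∏ i ∈ s, f i) - 1) + (f a - 1) := by ring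
    rw [h1]
    exact J.add_mem (J.mul_mem_left _ (ih fun i hi => h i (Finset.mem_cons_of_mem hi)))
      (h a (Finset.mem_cons_self a s))

lemma mem_of_supported {σ S' : Type*} [CommSemiring S'] [Algebra ℂ S']
    (T' : Subalgebra ℂ S') (χ : MvPolynomial σ ℂ →ₐ[ℂ] S') {s : Set σ}
    {f : MvPolynomial σ ℂ} (hf : f ∈ supported ℂ s) (h : ∀ w ∈ s, χ (X w) ∈ T') :
    χ f ∈ T' := by
  have h2 : χ f ∈ (Algebra.adjoin ℂ (X '' s)).map χ := ⟨f, hf, rfl⟩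
  rw [AlgHom.map_adjoin] at h2
  refine Algebra.adjoin_le ?_ h2
  rintro _ ⟨_, ⟨w, hw, rfl⟩, rfl⟩
  exact h w hw

lemma aevalX0_injective {P Q : Polynomial ℂ}
    (h : Polynomial.aeval (X 0 : MvPolynomial (Fin (m+1)) ℂ) P
       = Polynomial.aeval (X 0 : MvPolynomial (Fin (m+1)) ℂ) Q) : P = Q := by
  classical
  set pt : Fin (m+1) → Polynomial ℂ := fun v => if v = 0 then Polynomial.X else 0 with hpt
  have key : ∀ Z : Polynomial ℂ,
      (aeval pt : MvPolynomial (Fin (m+1)) ℂ →ₐ[ℂ] Polynomial ℂ)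
        (Polynomial.aeval (X 0) Z) = Z := by
    intro Z
    rw [← Polynomial.aeval_algHom_apply]
    simp [hpt]
  have := congrArg (aeval pt : MvPolynomial (Fin (m+1)) ℂ →ₐ[ℂ] Polynomial ℂ) h
  rwa [key, key] at this

lemma uGen_mem {n : ℕ} (e : Fin m → ℕ) (g : Fin m → MvPolynomial (Fin (m+1)) ℂ)
    (Qc : Fin n → Polynomial ℂ) : uGen Qc ∈ Jid e g Qc :=
  Ideal.subset_span (Or.inr rfl)

lemma Epoly_mem {n : ℕ} (e : Fin m → ℕ) (g : Fin m → MvPolynomial (Fin (m+1)) ℂ)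
    (Qc : Fin n → Polynomial ℂ) (k : Fin m) : emb (Epoly e g k) ∈ Jid e g Qc :=
  Ideal.subset_span (Or.inl ⟨k, rfl⟩)

lemma emb_polyaeval (Z : Polynomial ℂ) :
    emb (Polynomial.aeval (X 0 : MvPolynomial (Fin (m+1)) ℂ) Z)
      = Polynomial.aeval (X 0 : MvPolynomial (Fin (m+2)) ℂ) Z := by
  rw [← Polynomial.aeval_algHom_apply]
  unfold emb
  simp

lemma FQ_eq {n : ℕ} (p : Fin n → MvPolynomial (Fin (m+1)) ℂ)
    (Qc : Fin n → Polynomial ℂ) (i : Fin n) :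
    Fmap p Qc i * QQ Qc i = emb (p i) * (uGen Qc + 1) := by
  classical
  unfold Fmap uGen
  rw [show emb (p i) * (X (Fin.last (m+1)) * ∏ j ∈ Finset.univ.erase i, QQ Qc j)
        * QQ Qc i
      = emb (p i) * (X (Fin.last (m+1))
        * (QQ Qc i * ∏ j ∈ Finset.univ.erase i, QQ Qc j)) from by ring,
    Finset.mul_prod_erase _ _ (Finset.mem_univ i)]
  ring

lemma FQ_mem {n : ℕ} (e : Fin m → ℕ) (g : Fin m → MvPolynomial (Fin (m+1)) ℂ)
    (p : Fin n → MvPolynomial (Fin (m+1)) ℂ) (Qc : Fin n → Polynomial ℂ) (i : Fin n) :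
    Fmap p Qc i * QQ Qc i - emb (p i) ∈ Jid e g Qc := by
  classical
  have h1 : Fmap p Qc i * QQ Qc i - emb (p i) = emb (p i) * uGen Qc := by
    unfold Fmap uGen
    rw [show emb (p i) * (X (Fin.last (m+1)) * ∏ j ∈ Finset.univ.erase i, QQ Qc j)
          * QQ Qc i
        = emb (p i) * (X (Fin.last (m+1))
          * (QQ Qc i * ∏ j ∈ Finset.univ.erase i, QQ Qc j)) from by ring,
      Finset.mul_prod_erase _ _ (Finset.mem_univ i)]
    ring
  rw [h1]
  exact Ideal.mul_mem_left _ _ (uGen_mem e g Qc)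

lemma QQ_eq_emb {n : ℕ} (q : Fin n → MvPolynomial (Fin (m+1)) ℂ)
    (Qc : Fin n → Polynomial ℂ)
    (hQc : ∀ i, Polynomial.aeval (X 0 : MvPolynomial (Fin (m+1)) ℂ) (Qc i) = q i)
    (i : Fin n) : QQ Qc i = emb (q i) := by
  rw [← hQc i, ← Polynomial.aeval_algHom_apply]
  unfold QQ emb
  simp

lemma imageSet_subset_zeroLocus {n : ℕ} (e : Fin m → ℕ)
    (g : Fin m → MvPolynomial (Fin (m+1)) ℂ)
    (p q : Fin n → MvPolynomial (Fin (m+1)) ℂ) (Qc : Fin n → Polynomial ℂ)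
    (hQc : ∀ i, Polynomial.aeval (X 0 : MvPolynomial (Fin (m+1)) ℂ) (Qc i) = q i) :
    ImageSet e g p q ⊆ MvPolynomial.zeroLocus ℂ (Kid e g p Qc) := by
  classical
  rintro x ⟨a', hE, hqe, hx⟩ f hf
  set c : ℂ := (∏ j, eval a' (q j))⁻¹ with hc
  set a : Fin (m+2) → ℂ := Fin.snoc a' c with ha
  have hprodne : (∏ j, eval a' (q j)) ≠ 0 :=
    Finset.prod_ne_zero_iff.2 fun j _ => hqe j
  have hcmp : a ∘ Fin.castSucc = a' := funext fun i => by simp [ha]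
  have hembe : ∀ z : MvPolynomial (Fin (m+1)) ℂ, eval a (emb z) = eval a' z := by
    intro z
    unfold emb
    rw [eval_rename, hcmp]
  have hQa : ∀ j, eval a (QQ Qc j) = eval a' (q j) := fun j => by
    rw [QQ_eq_emb q Qc hQc, hembe]
  have halast : a (Fin.last (m+1)) = c := by simp [ha]
  have hJa : ∀ z ∈ Jid e g Qc, eval a z = 0 := by
    intro z hz
    have hle : Jid e g Qc ≤ vanishingIdeal ℂ {a} := by
      rw [Jid, Ideal.span_le]
      rintro z (⟨k, rfl⟩ | rfl)
      · intro y hy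
        rw [Set.mem_singleton_iff] at hy
        subst hy
        rw [aeval_eq_eval, hembe]
        exact hE k
      · intro y hy
        rw [Set.mem_singleton_iff] at hy
        subst hy
        rw [aeval_eq_eval]
        unfold uGen
        rw [map_sub, map_mul, map_one, eval_X, eval_prod]
        simp only [hQa, halast]
        rw [hc, inv_mul_cancel₀ hprodne, sub_self]
    exact hle hz a rfl
  have hFa : ∀ i, eval a (Fmap p Qc i) = x i := by
    intro i
    unfold Fmap
    rw [map_mul, map_mul, eval_X, eval_prod, hembe]
    simp only [hQa, halast]
    have h6 : (∏ j, eval a' (q j))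
        = eval a' (q i) * ∏ j ∈ Finset.univ.erase i, eval a' (q j) :=
      (Finset.mul_prod_erase Finset.univ (fun j => eval a' (q j))
        (Finset.mem_univ i)).symm
    have hprodee : (∏ j ∈ Finset.univ.erase i, eval a' (q j)) ≠ 0 :=
      Finset.prod_ne_zero_iff.2 fun j _ => hqe j
    have h5 : eval a' (q i) * (c * ∏ j ∈ Finset.univ.erase i, eval a' (q j)) = 1 := by
      rw [hc, h6]
      field_simp
      exact div_self (hqe i)
    rw [← hx i, eq_comm, div_eq_iff (hqe i)]
    linear_combination (-(eval a' (p i))) * h5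
  have hxe : x = fun i => eval a (Fmap p Qc i) := funext fun i => (hFa i).symm
  have : eval x f = eval a (aeval (Fmap p Qc) f) := by
    rw [eval_aeval', ← hxe]
  rw [aeval_eq_eval, this]
  exact hJa _ (Ideal.mem_comap.mp hf)

set_option maxHeartbeats 2000000 in
lemma zeroLocus_subset_imageSet {n : ℕ} (e : Fin m → ℕ) (he : ∀ k, e k ≠ 0)
    (g : Fin m → MvPolynomial (Fin (m+1)) ℂ)
    (hgv : ∀ i : Fin m, ∀ v ∈ (g i).vars, (v : ℕ) ≤ (i : ℕ))
    (p q : Fin n → MvPolynomial (Fin (m+1)) ℂ)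
    (Qc Ac Bc : Fin n → Polynomial ℂ)
    (hQc : ∀ i, Polynomial.aeval (X 0 : MvPolynomial (Fin (m+1)) ℂ) (Qc i) = q i)
    (hABc : ∀ i, (Polynomial.aeval (X 0 : MvPolynomial (Fin (m+1)) ℂ) (Ac i)) * p i
      + (Polynomial.aeval (X 0 : MvPolynomial (Fin (m+1)) ℂ) (Bc i)) * q i = 1)
    (i0 : Fin n) (P0 : Polynomial ℂ)
    (hP0 : Polynomial.aeval (X 0 : MvPolynomial (Fin (m+1)) ℂ) P0 = p i0)
    (hQ0ne : Qc i0 ≠ 0) (hdeg0 : (Qc i0).degree < P0.degree) :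
    MvPolynomial.zeroLocus ℂ (Kid e g p Qc) ⊆ ImageSet e g p q := by
  classical
  set J : Ideal (MvPolynomial (Fin (m+2)) ℂ) := Jid e g Qc with hJdef
  set K : Ideal (MvPolynomial (Fin n) ℂ) := Kid e g p Qc with hKdef
  set Φ : MvPolynomial (Fin n) ℂ →+* MvPolynomial (Fin (m+2)) ℂ :=
    (aeval (Fmap p Qc) : MvPolynomial (Fin n) ℂ →ₐ[ℂ] _).toRingHom with hΦdef
  letI algAS : Algebra (MvPolynomial (Fin n) ℂ ⧸ K) (MvPolynomial (Fin (m+2)) ℂ ⧸ J) :=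
    (Ideal.quotientMap J Φ le_rfl).toAlgebra
  have halg : ∀ r : MvPolynomial (Fin n) ℂ,
      algebraMap (MvPolynomial (Fin n) ℂ ⧸ K) (MvPolynomial (Fin (m+2)) ℂ ⧸ J)
        (Ideal.Quotient.mk K r) = Ideal.Quotient.mk J (aeval (Fmap p Qc) r) := by
    intro r
    show Ideal.quotientMap J Φ le_rfl (Ideal.Quotient.mk K r) = _
    exact Ideal.quotientMap_mk
  have halgC : ∀ c : ℂ,
      algebraMap ℂ (MvPolynomial (Fin n) ℂ ⧸ K) c = Ideal.Quotient.mk K (C c) := fun c => rfl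
  have halgCJ : ∀ c : ℂ,
      algebraMap ℂ (MvPolynomial (Fin (m+2)) ℂ ⧸ J) c = Ideal.Quotient.mk J (C c) :=
    fun c => rfl
  letI tower : IsScalarTower ℂ (MvPolynomial (Fin n) ℂ ⧸ K)
      (MvPolynomial (Fin (m+2)) ℂ ⧸ J) := by
    refine IsScalarTower.of_algebraMap_eq (R := ℂ)
      (S := MvPolynomial (Fin n) ℂ ⧸ K) (A := MvPolynomial (Fin (m+2)) ℂ ⧸ J)
      fun c => ?_
    rw [halgC, halg, halgCJ]
    simp
  set T := integralClosure (MvPolynomial (Fin n) ℂ ⧸ K)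
    (MvPolynomial (Fin (m+2)) ℂ ⧸ J) with hTdef
  -- `t` is integral
  have ht : Ideal.Quotient.mk J (X 0) ∈ T := by
    have hP0ne : P0 ≠ 0 := by
      intro h
      rw [h, Polynomial.degree_zero] at hdeg0
      exact not_lt_bot hdeg0
    have hcne : P0.leadingCoeff ≠ 0 := Polynomial.leadingCoeff_ne_zero.mpr hP0ne
    have hQd : (Qc i0).natDegree < P0.natDegree :=
      Polynomial.natDegree_lt_natDegree hQ0ne hdeg0
    set A' := MvPolynomial (Fin n) ℂ ⧸ K
    set S' := MvPolynomial (Fin (m+2)) ℂ ⧸ J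
    set xb : A' := Ideal.Quotient.mk K (X i0) with hxb
    set α : A' := algebraMap ℂ A' P0.leadingCoeff⁻¹ with hα
    rw [hTdef, mem_integralClosure_iff]
    refine ⟨Polynomial.C α * Polynomial.map (algebraMap ℂ A') P0
      - Polynomial.C (α * xb) * Polynomial.map (algebraMap ℂ A') (Qc i0), ?_, ?_⟩
    · apply Polynomial.monic_of_degree_le P0.natDegree
      · refine le_trans (Polynomial.degree_sub_le _ _) (max_le ?_ ?_)
        · refine le_trans (Polynomial.degree_mul_le _ _) ?_
          rw [← zero_add (P0.natDegree : WithBot ℕ)]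
          exact add_le_add Polynomial.degree_C_le
            (le_trans (Polynomial.degree_map_le) Polynomial.degree_le_natDegree)
        · refine le_trans (Polynomial.degree_mul_le _ _) ?_
          rw [← zero_add (P0.natDegree : WithBot ℕ)]
          refine add_le_add Polynomial.degree_C_le
            (le_trans (Polynomial.degree_map_le) ?_)
          exact le_trans (le_of_lt hdeg0) Polynomial.degree_le_natDegree
      · rw [Polynomial.coeff_sub, Polynomial.coeff_C_mul, Polynomial.coeff_C_mul,
          Polynomial.coeff_map, Polynomial.coeff_map,
          Polynomial.coeff_eq_zero_of_natDegree_lt hQd, Polynomial.coeff_natDegree,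
          map_zero, mul_zero, sub_zero, hα, ← map_mul,
          inv_mul_cancel₀ hcne, map_one]
    · rw [← Polynomial.aeval_def, map_sub, map_mul, map_mul, Polynomial.aeval_C,
        Polynomial.aeval_C, Polynomial.aeval_map_algebraMap,
        Polynomial.aeval_map_algebraMap]
      have h1 : Polynomial.aeval (Ideal.Quotient.mk J (X 0)) P0
          = Ideal.Quotient.mk J (Polynomial.aeval (X 0) P0) := by
        have := Polynomial.aeval_algHom_apply
          (Ideal.Quotient.mkₐ ℂ J) (X 0 : MvPolynomial (Fin (m+2)) ℂ) P0
        rw [Ideal.Quotient.mkₐ_eq_mk] at this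
        exact this
      have h2 : Polynomial.aeval (Ideal.Quotient.mk J (X 0)) (Qc i0)
          = Ideal.Quotient.mk J (QQ Qc i0) := by
        have := Polynomial.aeval_algHom_apply
          (Ideal.Quotient.mkₐ ℂ J) (X 0 : MvPolynomial (Fin (m+2)) ℂ) (Qc i0)
        rw [Ideal.Quotient.mkₐ_eq_mk] at this
        exact this
      have h3 : algebraMap A' S' xb = Ideal.Quotient.mk J (Fmap p Qc i0) := by
        rw [hxb, halg]
        simp
      have h4 : (Polynomial.aeval (X 0 : MvPolynomial (Fin (m+2)) ℂ)) P0
          - Fmap p Qc i0 * QQ Qc i0 ∈ J := by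
        have h5 : (Polynomial.aeval (X 0 : MvPolynomial (Fin (m+2)) ℂ)) P0 = emb (p i0) := by
          rw [← hP0, ← Polynomial.aeval_algHom_apply]
          unfold emb
          simp
        rw [h5, show emb (p i0) - Fmap p Qc i0 * QQ Qc i0
          = -(Fmap p Qc i0 * QQ Qc i0 - emb (p i0)) from by ring]
        exact neg_mem (FQ_mem e g p Qc i0)
      rw [h1, h2, map_mul, h3]
      have h6 : algebraMap A' S' α = algebraMap ℂ S' P0.leadingCoeff⁻¹ := by
        rw [hα, ← IsScalarTower.algebraMap_apply]
      rw [h6]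
      rw [show algebraMap ℂ S' P0.leadingCoeff⁻¹ * Ideal.Quotient.mk J (Polynomial.aeval (X 0) P0)
          - algebraMap ℂ S' P0.leadingCoeff⁻¹ * Ideal.Quotient.mk J (Fmap p Qc i0)
            * Ideal.Quotient.mk J (QQ Qc i0)
          = algebraMap ℂ S' P0.leadingCoeff⁻¹ * (Ideal.Quotient.mk J (Polynomial.aeval (X 0) P0)
            - Ideal.Quotient.mk J (Fmap p Qc i0) * Ideal.Quotient.mk J (QQ Qc i0)) from by ring,
        ← map_mul, ← map_sub, Ideal.Quotient.eq_zero_iff_mem.mpr h4, mul_zero]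
  have hTaux : ∀ N : ℕ, ∀ v : Fin (m+2), (v : ℕ) ≤ m → (v : ℕ) ≤ N →
      Ideal.Quotient.mk J (X v) ∈ T := by
    intro N
    induction N with
    | zero =>
      intro v hvm hv0
      have hv : v = 0 := by
        apply Fin.ext
        simpa using hv0
      rw [hv]
      exact ht
    | succ N IH =>
      intro v hvm hvN
      rcases Nat.eq_zero_or_pos (v : ℕ) with h0 | hpos
      · have hv : v = 0 := by
          apply Fin.ext
          simpa using h0
        rw [hv]
        exact ht
      · have hkm : (v : ℕ) - 1 < m := by omega
        set k : Fin m := ⟨(v : ℕ) - 1, hkm⟩ with hk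
        have hvk : Fin.castSucc k.succ = v := by
          apply Fin.ext
          simp only [Fin.coe_castSucc, Fin.val_succ, hk]
          omega
        have hsup : g k ∈ supported ℂ {w : Fin (m+1) | (w : ℕ) ≤ (k : ℕ)} := by
          rw [mem_supported]
          intro w hw
          exact hgv k w (Finset.mem_coe.mp hw)
        have hg : Ideal.Quotient.mk J (emb (g k)) ∈ T := by
          have hcond : ∀ w ∈ {w : Fin (m+1) | (w : ℕ) ≤ (k : ℕ)},
              ((Ideal.Quotient.mkₐ ℂ J).comp emb) (X w) ∈ T.restrictScalars ℂ := by
            intro w hw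
            have hw' : (w : ℕ) ≤ (k : ℕ) := hw
            have : ((Ideal.Quotient.mkₐ ℂ J).comp emb) (X w)
                = Ideal.Quotient.mk J (X (Fin.castSucc w)) := by
              simp [emb]
            rw [Subalgebra.mem_restrictScalars, this]
            have hkval : (k : ℕ) = (v : ℕ) - 1 := rfl
            rw [hkval] at hw'
            refine IH (Fin.castSucc w) ?_ ?_
            · simp only [Fin.coe_castSucc]
              omega
            · simp only [Fin.coe_castSucc]
              omega
          have := mem_of_supported (T.restrictScalars ℂ)
            ((Ideal.Quotient.mkₐ ℂ J).comp emb) hsup hcond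
          rw [Subalgebra.mem_restrictScalars] at this
          rwa [AlgHom.comp_apply, Ideal.Quotient.mkₐ_eq_mk] at this
        have hi : IsIntegral (↥T) (Ideal.Quotient.mk J (X v)) := by
          refine ⟨Polynomial.X ^ (e k) - Polynomial.C (⟨_, hg⟩ : T),
            Polynomial.monic_X_pow_sub_C (R := ↥T) _ (he k), ?_⟩
          rw [← Polynomial.aeval_def, map_sub, map_pow, Polynomial.aeval_X,
            Polynomial.aeval_C]
          have hval : algebraMap (↥T) (MvPolynomial (Fin (m+2)) ℂ ⧸ J)
              (⟨Ideal.Quotient.mk J (emb (g k)), hg⟩ : T)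
              = Ideal.Quotient.mk J (emb (g k)) := rfl
          rw [hval]
          have hXv : (X v : MvPolynomial (Fin (m+2)) ℂ) = emb (X k.succ) := by
            rw [← hvk]
            simp [emb]
          rw [hXv, ← map_pow, ← map_sub, ← map_pow, ← map_sub]
          apply Ideal.Quotient.eq_zero_iff_mem.mpr
          exact Epoly_mem e g Qc k
        rw [hTdef, mem_integralClosure_iff]
        exact isIntegral_trans _ hi
  have hT : ∀ v : Fin (m+2), (v : ℕ) ≤ m → Ideal.Quotient.mk J (X v) ∈ T :=
    fun v hv => hTaux (v : ℕ) v hv le_rfl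
  have hu : Ideal.Quotient.mk J (X (Fin.last (m+1))) ∈ T := by
    set Gp : Fin n → MvPolynomial (Fin (m+2)) ℂ := fun i =>
      Polynomial.aeval (X 0) (Ac i) * Fmap p Qc i + Polynomial.aeval (X 0) (Bc i) with hGp
    have hGQmem : ∀ i, Gp i * QQ Qc i - 1 ∈ J := by
      intro i
      have hQe : QQ Qc i = emb (q i) := QQ_eq_emb q Qc hQc i
      have hrel : Polynomial.aeval (X 0 : MvPolynomial (Fin (m+2)) ℂ) (Ac i) * emb (p i)
          + Polynomial.aeval (X 0 : MvPolynomial (Fin (m+2)) ℂ) (Bc i) * emb (q i) = 1 := by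
        have h2 := congrArg emb (hABc i)
        rw [map_add, map_mul, map_mul, map_one, emb_polyaeval, emb_polyaeval] at h2
        exact h2
      have hkey : Gp i * QQ Qc i - 1
          = (Polynomial.aeval (X 0 : MvPolynomial (Fin (m+2)) ℂ) (Ac i) * emb (p i))
            * uGen Qc := by
        rw [hGp]
        linear_combination (Polynomial.aeval (X 0 : MvPolynomial (Fin (m+2)) ℂ) (Ac i))
            * FQ_eq p Qc i
          + (Polynomial.aeval (X 0 : MvPolynomial (Fin (m+2)) ℂ) (Bc i)) * hQe + hrel
      rw [hkey]
      exact Ideal.mul_mem_left _ _ (uGen_mem e g Qc)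
    have hprod : (∏ i, (Gp i * QQ Qc i)) - 1 ∈ J :=
      prod_sub_one_mem J Finset.univ _ fun i _ => hGQmem i
    have hXl : X (Fin.last (m+1)) - ∏ i, Gp i ∈ J := by
      have hident : X (Fin.last (m+1)) - ∏ i, Gp i
          = (-(X (Fin.last (m+1)))) * ((∏ i, (Gp i * QQ Qc i)) - 1)
            + (∏ i, Gp i) * uGen Qc := by
        rw [Finset.prod_mul_distrib]
        unfold uGen
        ring
      rw [hident]
      exact Ideal.add_mem _ (Ideal.mul_mem_left _ _ hprod)
        (Ideal.mul_mem_left _ _ (uGen_mem e g Qc))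
    have hmk : Ideal.Quotient.mk J (X (Fin.last (m+1)))
        = ∏ i, Ideal.Quotient.mk J (Gp i) := by
      rw [← map_prod]
      exact (Ideal.Quotient.mk_eq_mk_iff_sub_mem _ _).mpr hXl
    have haev : ∀ Z : Polynomial ℂ,
        Ideal.Quotient.mk J (Polynomial.aeval (X 0) Z) ∈ T := by
      intro Z
      have h1 : Ideal.Quotient.mk J (Polynomial.aeval (X 0) Z)
          = Polynomial.aeval (Ideal.Quotient.mk J (X 0)) Z := by
        have h2 := Polynomial.aeval_algHom_apply
          (Ideal.Quotient.mkₐ ℂ J) (X 0 : MvPolynomial (Fin (m+2)) ℂ) Z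
        rw [Ideal.Quotient.mkₐ_eq_mk] at h2
        exact h2.symm
      have hRS : Polynomial.aeval (Ideal.Quotient.mk J (X 0)) Z
          ∈ T.restrictScalars ℂ := by
        refine Algebra.adjoin_le ?_ (Polynomial.aeval_mem_adjoin_singleton ℂ _)
        intro y hy
        rw [Set.mem_singleton_iff] at hy
        subst hy
        exact (Subalgebra.mem_restrictScalars ℂ).mpr ht
      rw [Subalgebra.mem_restrictScalars] at hRS
      rw [h1]
      exact hRS
    rw [hmk]
    refine Subalgebra.prod_mem T fun i _ => ?_
    have hFi : Ideal.Quotient.mk J (Fmap p Qc i)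
        = algebraMap (MvPolynomial (Fin n) ℂ ⧸ K) (MvPolynomial (Fin (m+2)) ℂ ⧸ J)
          (Ideal.Quotient.mk K (X i)) := by
      rw [halg]
      simp
    rw [hGp]
    simp only [map_add, map_mul]
    refine Subalgebra.add_mem T (Subalgebra.mul_mem T (haev _) ?_) (haev _)
    rw [hFi]
    exact Subalgebra.algebraMap_mem T _
  haveI hint : Algebra.IsIntegral (MvPolynomial (Fin n) ℂ ⧸ K)
      (MvPolynomial (Fin (m+2)) ℂ ⧸ J) := by
    constructor
    intro s
    obtain ⟨f, rfl⟩ := Ideal.Quotient.mk_surjective s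
    have hsup : f ∈ supported ℂ (Set.univ : Set (Fin (m+2))) := by
      rw [supported_univ]
      trivial
    have hcond : ∀ w ∈ (Set.univ : Set (Fin (m+2))),
        (Ideal.Quotient.mkₐ ℂ J) (X w) ∈ T.restrictScalars ℂ := by
      intro w _
      rw [Ideal.Quotient.mkₐ_eq_mk, Subalgebra.mem_restrictScalars]
      rcases le_or_gt (w : ℕ) m with hw | hw
      · exact hT w hw
      · have : w = Fin.last (m+1) := by
          apply Fin.ext
          have := w.isLt
          simp only [Fin.val_last]
          omega
        rw [this]
        exact hu
    have hmem := mem_of_supported (T.restrictScalars ℂ)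
      (Ideal.Quotient.mkₐ ℂ J) hsup hcond
    rw [Ideal.Quotient.mkₐ_eq_mk, Subalgebra.mem_restrictScalars] at hmem
    exact (mem_integralClosure_iff _ _).mp hmem
  -- main argument
  intro x hx
  set ε : (MvPolynomial (Fin n) ℂ ⧸ K) →+* ℂ :=
    Ideal.Quotient.lift K (eval x) (fun a ha => by rw [← aeval_eq_eval]; exact hx a ha) with hε
  have hεsurj : Function.Surjective ε := by
    intro c
    refine ⟨Ideal.Quotient.mk K (C c), ?_⟩
    rw [hε, Ideal.Quotient.lift_mk, eval_C]
  haveI hmax : (RingHom.ker ε).IsMaximal := RingHom.ker_isMaximal_of_surjective ε hεsurj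
  have hker : RingHom.ker (algebraMap (MvPolynomial (Fin n) ℂ ⧸ K)
      (MvPolynomial (Fin (m+2)) ℂ ⧸ J)) ≤ RingHom.ker ε := by
    have hinj : Function.Injective (algebraMap (MvPolynomial (Fin n) ℂ ⧸ K)
        (MvPolynomial (Fin (m+2)) ℂ ⧸ J)) := by
      show Function.Injective (Ideal.quotientMap J Φ le_rfl)
      exact Ideal.quotientMap_injective
    intro y hy
    rw [RingHom.mem_ker] at hy
    have hy0 : y = 0 := hinj (by rw [hy, map_zero])
    rw [RingHom.mem_ker, hy0, map_zero]
  obtain ⟨PP, hPPmax, hPPcomap⟩ :=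
    Ideal.exists_ideal_over_maximal_of_isIntegral (RingHom.ker ε) hker
  haveI := hPPmax
  set P' : Ideal (MvPolynomial (Fin (m+2)) ℂ) := PP.comap (Ideal.Quotient.mk J) with hP'
  haveI hP'max : P'.IsMaximal :=
    Ideal.comap_isMaximal_of_surjective _ Ideal.Quotient.mk_surjective
  obtain ⟨a, ha⟩ := (isMaximal_iff_eq_vanishingIdeal_singleton (I := P')).1 hP'max
  have hJP : ∀ z ∈ J, eval a z = 0 := by
    intro z hz
    have h1 : z ∈ P' := by
      rw [hP', Ideal.mem_comap]
      rw [Ideal.Quotient.eq_zero_iff_mem.mpr hz]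
      exact PP.zero_mem
    rw [ha] at h1
    exact (mem_vanishingIdeal_singleton_iff a z).1 h1
  have hFi : ∀ i, eval a (Fmap p Qc i) = x i := by
    intro i
    have hw : Ideal.Quotient.mk K (X i)
        - algebraMap ℂ (MvPolynomial (Fin n) ℂ ⧸ K) (x i) ∈ RingHom.ker ε := by
      rw [RingHom.mem_ker, map_sub, halgC, hε, Ideal.Quotient.lift_mk,
        Ideal.Quotient.lift_mk, eval_C, eval_X, sub_self]
    have hw2 : algebraMap (MvPolynomial (Fin n) ℂ ⧸ K) (MvPolynomial (Fin (m+2)) ℂ ⧸ J)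
        (Ideal.Quotient.mk K (X i)
          - algebraMap ℂ (MvPolynomial (Fin n) ℂ ⧸ K) (x i)) ∈ PP := by
      rw [← hPPcomap] at hw
      exact hw
    rw [map_sub, halg, aeval_X] at hw2
    have h3 : algebraMap (MvPolynomial (Fin n) ℂ ⧸ K) (MvPolynomial (Fin (m+2)) ℂ ⧸ J)
        (algebraMap ℂ (MvPolynomial (Fin n) ℂ ⧸ K) (x i))
        = Ideal.Quotient.mk J (C (x i)) := by
      rw [← IsScalarTower.algebraMap_apply, halgCJ]
    rw [h3, ← map_sub] at hw2
    have h4 : Fmap p Qc i - C (x i) ∈ P' := by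
      rw [hP', Ideal.mem_comap]
      exact hw2
    rw [ha] at h4
    have h5 := (mem_vanishingIdeal_singleton_iff a _).1 h4
    rw [aeval_eq_eval, map_sub, eval_C, sub_eq_zero] at h5
    exact h5
  -- construct the witness
  set a' : Fin (m+1) → ℂ := a ∘ Fin.castSucc with ha'
  have hembe : ∀ z : MvPolynomial (Fin (m+1)) ℂ, eval a (emb z) = eval a' z := by
    intro z
    unfold emb
    rw [eval_rename, ha']
  have hQa : ∀ j, eval a (QQ Qc j) = eval a' (q j) := fun j => by
    rw [QQ_eq_emb q Qc hQc, hembe]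
  have huval : a (Fin.last (m+1)) * ∏ j, eval a' (q j) = 1 := by
    have h0 := hJP _ (uGen_mem e g Qc)
    unfold uGen at h0
    rw [map_sub, map_mul, map_one, eval_X, eval_prod] at h0
    simp only [hQa] at h0
    exact sub_eq_zero.mp h0
  have hqne : ∀ i, eval a' (q i) ≠ 0 := by
    intro i h0
    rw [Finset.prod_eq_zero (Finset.mem_univ i) h0, mul_zero] at huval
    exact one_ne_zero huval.symm
  refine ⟨a', fun k => ?_, hqne, fun i => ?_⟩
  · rw [← hembe]
    exact hJP _ (Epoly_mem e g Qc k)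
  · have h6 := hFi i
    unfold Fmap at h6
    rw [map_mul, map_mul, eval_X, eval_prod, hembe] at h6
    simp only [hQa] at h6
    have h8 : (∏ j, eval a' (q j))
        = eval a' (q i) * ∏ j ∈ Finset.univ.erase i, eval a' (q j) :=
      (Finset.mul_prod_erase _ _ (Finset.mem_univ i)).symm
    have h5 : eval a' (q i)
        * (a (Fin.last (m+1)) * ∏ j ∈ Finset.univ.erase i, eval a' (q j)) = 1 := by
      linear_combination huval - a (Fin.last (m+1)) * h8
    rw [div_eq_iff (hqne i), ← h6]
    linear_combination (-(eval a' (p i))) * h5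

end Aux

/-- Let `P = (p₁/q₁,…,p_n/q_n)` be a radical parametrization such that each component is
either (a) rational, i.e. `p_i, q_i ∈ ℂ[t]` (embedded via `t ↦ X 0`) with
`gcd(p_i,q_i) = 1`, or (b) polynomial, i.e. `q_i = 1` and `N(p_i) = p_i`. If some rational
component satisfies `deg p_i > deg q_i`, then `X(P)` is Zariski closed in `ℂⁿ`. -/
theorem stmt14
    (m n : ℕ) (hm : 1 ≤ m) (e : Fin m → ℕ) (he : ∀ i, 2 ≤ e i)
    (g : Fin m → MvPolynomial (Fin (m+1)) ℂ)
    (hgv : ∀ i : Fin m, ∀ v ∈ (g i).vars, (v : ℕ) ≤ (i : ℕ))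
    (hgd : ∀ i j : Fin m, (j : ℕ) < (i : ℕ) → MvPolynomial.degreeOf j.succ (g i) < e j)
    (p q : Fin n → MvPolynomial (Fin (m+1)) ℂ) (hq : ∀ i, q i ≠ 0)
    (hcomp : ∀ i,
      (∃ P Q : Polynomial ℂ, IsCoprime P Q ∧
        Polynomial.aeval (X 0 : MvPolynomial (Fin (m+1)) ℂ) P = p i ∧
        Polynomial.aeval (X 0 : MvPolynomial (Fin (m+1)) ℂ) Q = q i) ∨
      (q i = 1 ∧ IsNormalForm e (p i)))
    (hdeg : ∃ (i : Fin n) (P Q : Polynomial ℂ), IsCoprime P Q ∧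
      Polynomial.aeval (X 0 : MvPolynomial (Fin (m+1)) ℂ) P = p i ∧
      Polynomial.aeval (X 0 : MvPolynomial (Fin (m+1)) ℂ) Q = q i ∧
      Q.degree < P.degree) :
    IsZariskiClosed (ImageSet e g p q) := by
  classical
  obtain ⟨i0, P0, Q0, hcop0, hP0, hQ0, hdeg0⟩ := hdeg
  have hsel : ∀ i, ∃ Q A B : Polynomial ℂ,
      Polynomial.aeval (X 0 : MvPolynomial (Fin (m+1)) ℂ) Q = q i ∧
      (Polynomial.aeval (X 0 : MvPolynomial (Fin (m+1)) ℂ) A) * p i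
        + (Polynomial.aeval (X 0 : MvPolynomial (Fin (m+1)) ℂ) B) * q i = 1 := by
    intro i
    rcases hcomp i with ⟨P, Q, cop, hP, hQ⟩ | ⟨hq1, _⟩
    · obtain ⟨A, B, hab⟩ := cop
      refine ⟨Q, A, B, hQ, ?_⟩
      rw [← hP, ← hQ, ← map_mul, ← map_mul, ← map_add, hab, map_one]
    · exact ⟨1, 0, 1, by simp [hq1], by simp [hq1]⟩
  choose Qc Ac Bc hQc hABc using hsel
  have hQ0c : Qc i0 = Q0 := aevalX0_injective (by rw [hQc, hQ0])
  have hQ0ne : Qc i0 ≠ 0 := by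
    intro h
    apply hq i0
    rw [← hQc i0, h, map_zero]
  have hdeg0' : (Qc i0).degree < P0.degree := by
    rw [hQ0c]
    exact hdeg0
  have he' : ∀ k, e k ≠ 0 := fun k => by
    have := he k
    omega
  refine ⟨(Kid e g p Qc : Set (MvPolynomial (Fin n) ℂ)), ?_⟩
  have h1 := imageSet_subset_zeroLocus e g p q Qc hQc
  have h2 := zeroLocus_subset_imageSet e he' g hgv p q Qc Ac Bc hQc hABc i0 P0 hP0
    hQ0ne hdeg0'
  exact Set.Subset.antisymm h1 h2


end Radical
end
end

section
/- Let p_1,…,p_n, q_1,…,q_n ∈ ℂ[t] with q_i ≠ 0 and gcd(p_i, q_i) = 1 for every i, and suppose there exists i_0 such that deg(p_{i_0}) > deg(q_{i_0}). Then the image set {(p_1(t)/q_1(t),…,p_n(t)/q_n(t)) : t ∈ ℂ, q_i(t) ≠ 0 for all i} is Zariski closed in ℂ^n; that is, the rational parametrization (p_1/q_1,…,p_n/q_n) is surjective. -/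
/-- A subset of `ℂⁿ` is Zariski closed if it is the common zero locus of a family of
polynomials in `n` complex variables. -/
def IsZariskiClosed {n : ℕ} (S : Set (Fin n → ℂ)) : Prop :=
  ∃ T : Set (MvPolynomial (Fin n) ℂ), S = {x | ∀ p ∈ T, MvPolynomial.eval x p = 0}

set_option maxHeartbeats 2000000 in
/-- Let `p₁,…,p_n, q₁,…,q_n ∈ ℂ[t]` with `q_i ≠ 0` and `gcd(p_i,q_i) = 1` for every `i`,
and suppose `deg p_{i₀} > deg q_{i₀}` for some `i₀`. Then the image of the rational
parametrization `t ↦ (p₁(t)/q₁(t), …, p_n(t)/q_n(t))` is Zariski closed in `ℂⁿ`. -/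
theorem stmt15 (n : ℕ) (p q : Fin n → Polynomial ℂ) (hq : ∀ i, q i ≠ 0)
    (hcop : ∀ i, IsCoprime (p i) (q i)) (i₀ : Fin n)
    (hdeg : (q i₀).degree < (p i₀).degree) :
    IsZariskiClosed
      {x : Fin n → ℂ | ∃ t : ℂ, (∀ i, (q i).eval t ≠ 0) ∧
        ∀ i, (p i).eval t / (q i).eval t = x i} := by
  classical
  set A := MvPolynomial (Fin n) ℂ with hA
  let σ : ℂ →+* A := MvPolynomial.C
  have hσinj : Function.Injective σ := MvPolynomial.C_injective _ _
  let R : Fin n → Polynomial A := fun i =>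
    (p i).map σ - Polynomial.C (MvPolynomial.X i) * (q i).map σ
  let J : Ideal (Polynomial A) := Ideal.span (Set.range R)
  refine ⟨{f : A | Polynomial.C f ∈ J}, ?_⟩
  ext x
  let Φ : Polynomial A →+* Polynomial ℂ := Polynomial.mapRingHom (MvPolynomial.eval x)
  have hcomp : (MvPolynomial.eval x).comp σ = RingHom.id ℂ := by
    ext c; simp [σ]
  have hΦR : ∀ i, Φ (R i) = p i - Polynomial.C (x i) * q i := by
    intro i
    simp only [Φ, R, Polynomial.coe_mapRingHom, Polynomial.map_sub, Polynomial.map_mul,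
      Polynomial.map_map, hcomp, Polynomial.map_id, Polynomial.map_C]
    rw [MvPolynomial.eval_X]
  constructor
  · rintro ⟨t₀, hqt, hx⟩ f hf
    let ψ : Polynomial A →+* ℂ := (Polynomial.evalRingHom t₀).comp Φ
    have hψR : ∀ i, ψ (R i) = 0 := by
      intro i
      have h2 : (p i).eval t₀ = x i * (q i).eval t₀ := by
        rw [← hx i, div_mul_cancel₀ _ (hqt i)]
      simp [ψ, hΦR i, h2]
    have hJker : J ≤ RingHom.ker ψ := by
      rw [show J = Ideal.span (Set.range R) from rfl, Ideal.span_le]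
      rintro _ ⟨i, rfl⟩
      exact hψR i
    have h0 : ψ (Polynomial.C f) = 0 := hJker hf
    simpa [ψ, Φ] using h0
  · intro hx
    let r : Fin n → Polynomial ℂ := fun i => p i - Polynomial.C (x i) * q i
    have hCmul : ∀ i, (Polynomial.C (x i) * q i).degree ≤ (q i).degree := by
      intro i
      rw [← Polynomial.smul_eq_C_mul]
      exact Polynomial.degree_smul_le _ _
    have hrd : (r i₀).degree = (p i₀).degree :=
      Polynomial.degree_sub_eq_left_of_degree_lt (lt_of_le_of_lt (hCmul i₀) hdeg)
    have hq0 : (0 : WithBot ℕ) ≤ (q i₀).degree := Polynomial.zero_le_degree_iff.mpr (hq i₀)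
    have hp_pos : 0 < (p i₀).degree := lt_of_le_of_lt hq0 hdeg
    have hr_pos : 0 < (r i₀).degree := hrd ▸ hp_pos
    have hr0 : r i₀ ≠ 0 := by
      intro h; rw [h, Polynomial.degree_zero] at hr_pos; exact absurd hr_pos (by simp)
    -- existence of a common root
    have hroot : ∃ t₀ : ℂ, ∀ i, (r i).eval t₀ = 0 := by
      by_contra hcon
      push_neg at hcon
      -- the ideal generated by the r i is everything
      have hspan : Ideal.span (Set.range r) = ⊤ := by
        by_contra hne
        obtain ⟨g, hg⟩ := (IsPrincipalIdealRing.principal (Ideal.span (Set.range r))).principal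
        have hdvd : ∀ i, g ∣ r i := by
          intro i
          rw [← Ideal.mem_span_singleton, show (Ideal.span {g} : Ideal (Polynomial ℂ)) = Ideal.span (Set.range r) from hg.symm]
          exact Ideal.subset_span ⟨i, rfl⟩
        have hgne : g ≠ 0 := by
          rintro rfl; exact hr0 (zero_dvd_iff.mp (hdvd i₀))
        have hgnu : ¬ IsUnit g := by
          intro h
          refine hne ?_
          rw [show Ideal.span (Set.range r) = Ideal.span {g} from hg]
          exact Ideal.span_singleton_eq_top.mpr h
        have hgd : 0 < g.degree :=
          lt_of_le_of_ne (Polynomial.zero_le_degree_iff.mpr hgne)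
            (fun h => hgnu (Polynomial.isUnit_iff_degree_eq_zero.mpr h.symm))
        obtain ⟨t₀, ht₀⟩ := Complex.exists_root hgd
        obtain ⟨i, hi⟩ := hcon t₀
        exact hi (ht₀.dvd (hdvd i))
      -- hence 1 is in J + ker Φ
      have hΦsurj : Function.Surjective Φ :=
        Polynomial.map_surjective _ (fun c => ⟨MvPolynomial.C c, MvPolynomial.eval_C c⟩)
      have hmapJ : Ideal.map Φ J = ⊤ := by
        rw [show J = Ideal.span (Set.range R) from rfl, Ideal.map_span,
          ← Set.range_comp, show (⇑Φ ∘ R) = r from funext hΦR, hspan]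
      have h1 : (1 : Polynomial A) ∈ J ⊔ RingHom.ker Φ := by
        have h1' : (1 : Polynomial A) ∈ Ideal.comap Φ (Ideal.map Φ J) := by
          rw [hmapJ, Ideal.comap_top]; exact Submodule.mem_top
        rwa [Ideal.comap_map_of_surjective Φ hΦsurj] at h1'
      set I : Ideal A := RingHom.ker (MvPolynomial.eval x) with hI
      have hker : RingHom.ker Φ = Ideal.map Polynomial.C I := Polynomial.ker_mapRingHom _
      rw [hker] at h1
      -- quotient module
      let B := Polynomial A ⧸ J
      let mk : Polynomial A →+* B := Ideal.Quotient.mk J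
      have halg : ∀ a : A, mk (Polynomial.C a) = a • (1 : B) := by
        intro a
        have h1 : Polynomial.C a = a • (1 : Polynomial A) := by
          rw [← Polynomial.C_1, Polynomial.smul_C, smul_eq_mul, mul_one]
        exact (congrArg _ h1).trans (Submodule.Quotient.mk_smul J a 1)
      -- everything is in I • ⊤
      have hmul : ∀ (y : B), ∀ z ∈ (I • (⊤ : Submodule A B)), y * z ∈ (I • (⊤ : Submodule A B)) := by
        intro y z hz
        refine Submodule.smul_induction_on hz (fun a ha m _ => ?_) (fun u v hu hv => ?_)
        · rw [mul_smul_comm]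
          exact Submodule.smul_mem_smul ha Submodule.mem_top
        · rw [mul_add]; exact Submodule.add_mem _ hu hv
      have hK : ∀ k ∈ Ideal.map (Polynomial.C : A →+* Polynomial A) I,
          mk k ∈ (I • (⊤ : Submodule A B)) := by
        intro k hk
        refine Submodule.span_induction (p := fun k _ => mk k ∈ (I • (⊤ : Submodule A B)))
          ?_ ?_ ?_ ?_ hk
        · rintro _ ⟨a, ha, rfl⟩
          rw [halg a]
          exact Submodule.smul_mem_smul ha Submodule.mem_top
        · simp only [map_zero]; exact Submodule.zero_mem _
        · intro u v _ _ hu hv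
          rw [map_add]; exact Submodule.add_mem _ hu hv
        · intro s k _ hk'
          rw [smul_eq_mul, map_mul]
          exact hmul _ _ hk'
      have hsup : ∀ b : B, b ∈ (I • (⊤ : Submodule A B)) := by
        intro b
        obtain ⟨s, rfl⟩ := Ideal.Quotient.mk_surjective b
        obtain ⟨j, hj, k, hk, hjk⟩ := Submodule.mem_sup.mp h1
        have hs : s = s * j + s * k := by rw [← mul_add, hjk, mul_one]
        have : mk s = mk (s * k) := by
          conv_lhs => rw [hs]
          rw [map_add, Ideal.Quotient.eq_zero_iff_mem.mpr (J.mul_mem_left s hj), zero_add]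
        rw [this]
        exact hK _ (Ideal.mul_mem_left _ s hk)
      -- finiteness via the monic polynomial G
      set c := (p i₀).leadingCoeff with hc'
      have hpne : p i₀ ≠ 0 := by
        intro h; rw [h, Polynomial.degree_zero] at hp_pos; exact absurd hp_pos (by simp)
      have hc : c ≠ 0 := Polynomial.leadingCoeff_ne_zero.mpr hpne
      let G : Polynomial A := Polynomial.C (MvPolynomial.C c⁻¹) * R i₀
      have hdegmap : ∀ f : Polynomial ℂ, (f.map σ).degree = f.degree := fun f =>
        Polynomial.degree_map_eq_of_injective hσinj f
      have hRdeg : (Polynomial.C (MvPolynomial.X i₀) * (q i₀).map σ).degree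
          < ((p i₀).map σ).degree := by
        calc (Polynomial.C (MvPolynomial.X i₀) * (q i₀).map σ).degree
            ≤ (Polynomial.C (MvPolynomial.X i₀)).degree + ((q i₀).map σ).degree :=
              Polynomial.degree_mul_le _ _
          _ ≤ 0 + ((q i₀).map σ).degree := by
              gcongr; exact Polynomial.degree_C_le
          _ = (q i₀).degree := by rw [zero_add, hdegmap]
          _ < (p i₀).degree := hdeg
          _ = ((p i₀).map σ).degree := (hdegmap _).symm
      have hlead : (R i₀).leadingCoeff = MvPolynomial.C c := by
        show ((p i₀).map σ - Polynomial.C (MvPolynomial.X i₀) * (q i₀).map σ).leadingCoeff = _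
        rw [Polynomial.leadingCoeff_sub_of_degree_lt hRdeg, Polynomial.leadingCoeff_map_of_injective hσinj]
      have hGmonic : G.Monic := by
        show G.leadingCoeff = 1
        rw [show G = Polynomial.C (MvPolynomial.C c⁻¹) * R i₀ from rfl,
          Polynomial.leadingCoeff_mul, Polynomial.leadingCoeff_C, hlead, ← map_mul,
          inv_mul_cancel₀ hc, map_one]
      have hGJ : G ∈ J :=
        Ideal.mul_mem_left _ _ (Ideal.subset_span ⟨i₀, rfl⟩)
      set d := G.natDegree with hd
      have hfg : (⊤ : Submodule A B).FG := by
        refine ⟨(Finset.range (d + 1)).image (fun k => mk (Polynomial.X ^ k)), ?_⟩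
        rw [eq_top_iff]
        rintro b -
        obtain ⟨s, rfl⟩ := Ideal.Quotient.mk_surjective b
        have hmod : mk s = mk (s %ₘ G) := by
          conv_lhs => rw [← Polynomial.modByMonic_add_div s G]
          rw [map_add, Ideal.Quotient.eq_zero_iff_mem.mpr (J.mul_mem_right _ hGJ), add_zero]
        rw [hmod]
        have hdeg' : (s %ₘ G).degree < ((d + 1 : ℕ) : WithBot ℕ) :=
          lt_of_lt_of_le (Polynomial.degree_modByMonic_lt s hGmonic)
            (le_trans (Polynomial.degree_le_natDegree) (by exact_mod_cast Nat.le_succ d))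
        have hmem : s %ₘ G ∈ Polynomial.degreeLT A (d + 1) := Polynomial.mem_degreeLT.mpr hdeg'
        rw [Polynomial.degreeLT_eq_span_X_pow] at hmem
        have h2 := Submodule.mem_map_of_mem (f := (Ideal.Quotient.mkₐ A J).toLinearMap) hmem
        rw [Submodule.map_span] at h2
        refine Submodule.span_mono ?_ h2
        rintro _ ⟨y, hy, rfl⟩
        simp only [Finset.coe_image, Set.mem_image, Finset.mem_coe, Finset.mem_range] at hy ⊢
        obtain ⟨k, hk, rfl⟩ := hy
        exact ⟨k, hk, rfl⟩
      obtain ⟨rr, hrr1, hrr0⟩ :=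
        Submodule.exists_sub_one_mem_and_smul_eq_zero_of_fg_of_le_smul I ⊤ hfg
          (fun b _ => hsup b)
      have h1B : rr • (1 : B) = 0 := hrr0 1 Submodule.mem_top
      have hmk0 : mk (Polynomial.C rr) = 0 := by rw [halg rr]; exact h1B
      have hT : Polynomial.C rr ∈ J := Ideal.Quotient.eq_zero_iff_mem.mp hmk0
      have h0 : MvPolynomial.eval x rr = 0 := hx _ hT
      have h1' : MvPolynomial.eval x rr = 1 := by
        have := RingHom.mem_ker.mp hrr1
        rw [map_sub, map_one, sub_eq_zero] at this
        exact this
      rw [h0] at h1'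
      exact zero_ne_one h1'
    obtain ⟨t₀, ht₀⟩ := hroot
    have hpq : ∀ i, (p i).eval t₀ = x i * (q i).eval t₀ := by
      intro i
      have := ht₀ i
      simp only [r, Polynomial.eval_sub, Polynomial.eval_mul, Polynomial.eval_C,
        sub_eq_zero] at this
      exact this
    have hqne : ∀ i, (q i).eval t₀ ≠ 0 := by
      intro i h0
      obtain ⟨a, b, hab⟩ := hcop i
      have := congrArg (Polynomial.eval t₀) hab
      rw [Polynomial.eval_one, Polynomial.eval_add, Polynomial.eval_mul, Polynomial.eval_mul,
        h0, hpq i, h0, mul_zero, mul_zero, mul_zero, add_zero] at this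
      exact zero_ne_one this
    exact ⟨t₀, hqne, fun i => by rw [hpq i, mul_div_assoc, div_self (hqne i), mul_one]⟩
end
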